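/- arXiv:2108.08645 — 5 statements merged into one kernel-verified Lean document; each statement's English description precedes it below -/
import Mathlib

section
/- Let n be a positive integer and let f : ℤⁿ → ℤ be a function satisfying f(k·x) = |k|·f(x) for all k ∈ ℤ and x ∈ ℤⁿ, and f(x + y) ≤ f(x) + f(y) for all x, y ∈ ℤⁿ. Then there exists a seminorm p on ℝⁿ such that p(x) = f(x) for every x ∈ ℤⁿ (where ℤⁿ is regarded as a subset of ℝⁿ via the coordinatewise inclusion ℤ ⊂ ℝ). -/
namespace ThurstonExt

variable {n : ℕ} (f : (Fin n → ℤ) → ℤ)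

/-- coordinatewise inclusion of the lattice -/
def cR (z : Fin n → ℤ) : Fin n → ℝ := fun i => (z i : ℝ)

lemma cR_add (z w : Fin n → ℤ) : cR (z + w) = cR z + cR w := by
  funext i; simp [cR]

lemma cR_smul (k : ℤ) (z : Fin n → ℤ) : cR (k • z) = (k : ℝ) • cR z := by
  funext i; simp [cR]

lemma cR_neg (z : Fin n → ℤ) : cR (-z) = -cR z := by
  funext i; simp [cR]

/-- the Lipschitz constant -/
noncomputable def pC (f : (Fin n → ℤ) → ℤ) : ℝ := ∑ i : Fin n, (f (Pi.single i 1) : ℝ)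

noncomputable def pval (x : Fin n → ℝ) (mz : ℕ × (Fin n → ℤ)) : ℝ :=
  ((f mz.2 : ℝ) + pC f * ‖(mz.1 + 1 : ℝ) • x - cR mz.2‖) / (mz.1 + 1)

noncomputable def pExt (x : Fin n → ℝ) : ℝ := ⨅ mz, pval f x mz

section hyps
variable (hhom : ∀ (k : ℤ) (x : Fin n → ℤ), f (k • x) = |k| * f x)
  (hsub : ∀ x y : Fin n → ℤ, f (x + y) ≤ f x + f y)

include hhom in
lemma f_zero : f 0 = 0 := by
  have := hhom 0 0; simpa using this

include hhom in
lemma f_neg (x : Fin n → ℤ) : f (-x) = f x := by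
  have := hhom (-1) x; simpa using this

include hhom hsub in
lemma f_nonneg (x : Fin n → ℤ) : 0 ≤ f x := by
  have h1 := hsub x (-x)
  have h2 := f_neg f hhom x
  have h3 := f_zero f hhom
  simp only [add_neg_cancel] at h1
  omega

include hhom hsub in
lemma pC_nonneg : 0 ≤ pC f := by
  apply Finset.sum_nonneg
  intro i _
  exact_mod_cast f_nonneg f hhom hsub _

include hhom hsub in
lemma f_sum_le {ι : Type*} (s : Finset ι) (g : ι → (Fin n → ℤ)) :
    f (∑ i ∈ s, g i) ≤ ∑ i ∈ s, f (g i) := by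
  classical
  induction s using Finset.induction with
  | empty => simp [f_zero f hhom]
  | insert a s h ih =>
    rw [Finset.sum_insert h, Finset.sum_insert h]
    exact (hsub _ _).trans (add_le_add_right ih _)

include hhom hsub in
/-- key estimate: `f` is controlled by `pC f` times the sup norm -/
lemma f_le_norm (z : Fin n → ℤ) : (f z : ℝ) ≤ pC f * ‖cR z‖ := by
  have h1 : f z ≤ ∑ i : Fin n, |z i| * f (Pi.single i 1) := by
    have h := f_sum_le f hhom hsub Finset.univ (fun i => (Pi.single i (z i) : Fin n → ℤ))
    rw [Finset.univ_sum_single z] at h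
    refine h.trans (le_of_eq (Finset.sum_congr rfl fun i _ => ?_))
    have h0 : (Pi.single i (z i) : Fin n → ℤ) = z i • (Pi.single i (1:ℤ) : Fin n → ℤ) := by
      funext j
      by_cases hj : j = i <;> simp [Pi.single_apply, hj]
    rw [h0, hhom]
  have h2 : (f z : ℝ) ≤ ∑ i : Fin n, |(z i : ℝ)| * (f (Pi.single i 1) : ℝ) := by
    exact_mod_cast h1
  refine h2.trans ?_
  rw [pC, Finset.sum_mul]
  refine Finset.sum_le_sum fun i _ => ?_
  have hb : |(z i : ℝ)| ≤ ‖cR z‖ := by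
    have := norm_le_pi_norm (cR z) i
    simpa [cR, Real.norm_eq_abs] using this
  have hfn : (0:ℝ) ≤ (f (Pi.single i 1) : ℝ) := by exact_mod_cast f_nonneg f hhom hsub _
  calc |(z i : ℝ)| * (f (Pi.single i 1) : ℝ) ≤ ‖cR z‖ * (f (Pi.single i 1) : ℝ) :=
        mul_le_mul_of_nonneg_right hb hfn
    _ = (f (Pi.single i 1) : ℝ) * ‖cR z‖ := mul_comm _ _

include hhom hsub in
lemma pval_nonneg (x : Fin n → ℝ) (mz : ℕ × (Fin n → ℤ)) : 0 ≤ pval f x mz := by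
  have h1 : (0:ℝ) ≤ (f mz.2 : ℝ) := by exact_mod_cast f_nonneg f hhom hsub _
  have h2 : (0:ℝ) ≤ pC f * ‖(mz.1 + 1 : ℝ) • x - cR mz.2‖ :=
    mul_nonneg (pC_nonneg f hhom hsub) (norm_nonneg _)
  have h3 : (0:ℝ) < (mz.1 : ℝ) + 1 := by positivity
  exact div_nonneg (by linarith) h3.le

include hhom hsub in
lemma pval_bddBelow (x : Fin n → ℝ) : BddBelow (Set.range (pval f x)) := by
  refine ⟨0, ?_⟩
  rintro _ ⟨mz, rfl⟩
  exact pval_nonneg f hhom hsub x mz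

include hhom hsub in
lemma pExt_nonneg (x : Fin n → ℝ) : 0 ≤ pExt f x :=
  le_ciInf (pval_nonneg f hhom hsub x)

include hhom hsub in
lemma pExt_le (x : Fin n → ℝ) (mz : ℕ × (Fin n → ℤ)) : pExt f x ≤ pval f x mz :=
  ciInf_le (pval_bddBelow f hhom hsub x) mz

include hhom hsub in
/-- agreement on the lattice -/
lemma pExt_int (z : Fin n → ℤ) : pExt f (cR z) = (f z : ℝ) := by
  apply le_antisymm
  · have := pExt_le f hhom hsub (cR z) (0, z)
    simpa [pval] using this
  · refine le_ciInf fun ⟨m, w⟩ => ?_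
    rw [pval]
    have hm : (0:ℝ) < (m : ℝ) + 1 := by positivity
    rw [le_div_iff₀ hm]
    have hcast : ((m:ℝ) + 1) • cR z - cR w = cR (((m:ℤ)+1) • z - w) := by
      funext i
      simp only [cR, Pi.sub_apply, Pi.smul_apply, Pi.add_apply, smul_eq_mul]
      push_cast; ring
    have h1 : (f (((m:ℤ)+1) • z - w) : ℝ) ≤ pC f * ‖((m:ℝ) + 1) • cR z - cR w‖ := by
      rw [hcast]; exact f_le_norm f hhom hsub _
    have h2 : f (((m:ℤ)+1) • z) ≤ f w + f (((m:ℤ)+1) • z - w) := by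
      have := hsub w (((m:ℤ)+1) • z - w)
      simpa using this
    have h3 : f (((m:ℤ)+1) • z) = ((m:ℤ)+1) * f z := by
      rw [hhom, abs_of_pos (by positivity : (0:ℤ) < (m:ℤ)+1)]
    have h4 : ((m:ℝ)+1) * (f z : ℝ) ≤ (f w : ℝ) + (f (((m:ℤ)+1) • z - w) : ℝ) := by
      rw [h3] at h2
      exact_mod_cast h2
    calc (f z : ℝ) * ((m:ℝ)+1) = ((m:ℝ)+1) * (f z : ℝ) := mul_comm _ _
      _ ≤ (f w : ℝ) + (f (((m:ℤ)+1) • z - w) : ℝ) := h4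
      _ ≤ (f w : ℝ) + pC f * ‖((m:ℝ) + 1) • cR z - cR w‖ := by linarith

include hhom hsub in
/-- subadditivity -/
lemma pExt_add (x y : Fin n → ℝ) : pExt f (x + y) ≤ pExt f x + pExt f y := by
  refine le_ciInf_add_ciInf fun ⟨m, z⟩ ⟨k, w⟩ => ?_
  -- combined competitor
  set M : ℝ := (m:ℝ) + 1 with hM
  set K : ℝ := (k:ℝ) + 1 with hK
  have hMpos : (0:ℝ) < M := by positivity
  have hKpos : (0:ℝ) < K := by positivity
  have key := pExt_le f hhom hsub (x + y) (m * k + m + k, ((k:ℤ)+1) • z + ((m:ℤ)+1) • w)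
  refine key.trans ?_
  rw [pval, pval, pval]
  simp only
  have hMK : ((m * k + m + k : ℕ) : ℝ) + 1 = M * K := by push_cast [hM, hK]; ring
  rw [hMK]
  -- bound the f-term
  have hf1 : f (((k:ℤ)+1) • z + ((m:ℤ)+1) • w) ≤ ((k:ℤ)+1) * f z + ((m:ℤ)+1) * f w := by
    refine (hsub _ _).trans ?_
    have e1 : f (((k:ℤ)+1) • z) = ((k:ℤ)+1) * f z := by
      rw [hhom, abs_of_pos (by positivity : (0:ℤ) < (k:ℤ)+1)]
    have e2 : f (((m:ℤ)+1) • w) = ((m:ℤ)+1) * f w := by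
      rw [hhom, abs_of_pos (by positivity : (0:ℤ) < (m:ℤ)+1)]
    omega
  have hf1' : (f (((k:ℤ)+1) • z + ((m:ℤ)+1) • w) : ℝ) ≤ K * (f z : ℝ) + M * (f w : ℝ) := by
    have : ((f (((k:ℤ)+1) • z + ((m:ℤ)+1) • w) : ℤ) : ℝ) ≤
        (((((k:ℤ)+1) * f z + ((m:ℤ)+1) * f w) : ℤ) : ℝ) := by exact_mod_cast hf1
    push_cast at this
    rw [hM, hK]; linarith
  -- bound the norm term
  have hnorm : ‖(M * K) • (x + y) - cR (((k:ℤ)+1) • z + ((m:ℤ)+1) • w)‖ ≤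
      K * ‖M • x - cR z‖ + M * ‖K • y - cR w‖ := by
    have hrw : (M * K) • (x + y) - cR (((k:ℤ)+1) • z + ((m:ℤ)+1) • w) =
        K • (M • x - cR z) + M • (K • y - cR w) := by
      rw [cR_add, cR_smul, cR_smul]
      push_cast
      rw [smul_add, smul_sub, smul_sub, smul_smul, smul_smul]
      rw [hM, hK]
      module
    rw [hrw]
    calc ‖K • (M • x - cR z) + M • (K • y - cR w)‖
        ≤ ‖K • (M • x - cR z)‖ + ‖M • (K • y - cR w)‖ := norm_add_le _ _
      _ = K * ‖M • x - cR z‖ + M * ‖K • y - cR w‖ := by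
          rw [norm_smul, norm_smul, Real.norm_eq_abs, Real.norm_eq_abs,
            abs_of_pos hKpos, abs_of_pos hMpos]
  have hCpos := pC_nonneg f hhom hsub
  have hMcast : ((m:ℝ) + 1) = M := rfl
  have hKcast : ((k:ℝ) + 1) = K := rfl
  rw [hMcast, hKcast]
  rw [div_add_div _ _ (ne_of_gt hMpos) (ne_of_gt hKpos), div_le_div_iff₀ (by positivity) (by positivity)]
  have hC1 : pC f * ‖(M * K) • (x + y) - cR (((k:ℤ)+1) • z + ((m:ℤ)+1) • w)‖ ≤
      pC f * (K * ‖M • x - cR z‖ + M * ‖K • y - cR w‖) :=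
    mul_le_mul_of_nonneg_left hnorm hCpos
  nlinarith [hf1', hC1, norm_nonneg (M • x - cR z), norm_nonneg (K • y - cR w),
    mul_pos hMpos hKpos]

include hhom hsub in
/-- Lipschitz estimate -/
lemma pExt_lip (x y : Fin n → ℝ) : pExt f x ≤ pExt f y + pC f * ‖x - y‖ := by
  have h : ∀ mz : ℕ × (Fin n → ℤ), pExt f x - pC f * ‖x - y‖ ≤ pval f y mz := by
    rintro ⟨m, z⟩
    have key := pExt_le f hhom hsub x (m, z)
    rw [pval] at key ⊢
    simp only at key ⊢
    have hm : (0:ℝ) < (m:ℝ) + 1 := by positivity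
    have hn1 : ‖((m:ℝ)+1) • x - cR z‖ ≤ ‖((m:ℝ)+1) • y - cR z‖ + ((m:ℝ)+1) * ‖x - y‖ := by
      calc ‖((m:ℝ)+1) • x - cR z‖ = ‖(((m:ℝ)+1) • y - cR z) + ((m:ℝ)+1) • (x - y)‖ := by
            congr 1; rw [smul_sub]; abel
        _ ≤ ‖((m:ℝ)+1) • y - cR z‖ + ‖((m:ℝ)+1) • (x - y)‖ := norm_add_le _ _
        _ = ‖((m:ℝ)+1) • y - cR z‖ + ((m:ℝ)+1) * ‖x - y‖ := by
            rw [norm_smul, Real.norm_eq_abs, abs_of_pos hm]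
    have hCpos := pC_nonneg f hhom hsub
    have step : ((f z : ℝ) + pC f * ‖((m:ℝ)+1) • x - cR z‖) / ((m:ℝ)+1) ≤
        ((f z : ℝ) + pC f * ‖((m:ℝ)+1) • y - cR z‖) / ((m:ℝ)+1) + pC f * ‖x - y‖ := by
      rw [div_add' _ _ _ (ne_of_gt hm), div_le_div_iff₀ hm hm]
      have := mul_le_mul_of_nonneg_left hn1 hCpos
      nlinarith
    linarith [key.trans step]
  have h2 : pExt f x - pC f * ‖x - y‖ ≤ pExt f y := le_ciInf h
  linarith

include hhom hsub in
lemma pExt_zero : pExt f 0 = 0 := by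
  apply le_antisymm
  · have := pExt_le f hhom hsub 0 (0, 0)
    have hc : cR (0 : Fin n → ℤ) = 0 := by funext i; simp [cR]
    simpa [pval, hc, f_zero f hhom] using this
  · exact pExt_nonneg f hhom hsub 0

include hhom hsub in
lemma pExt_neg (x : Fin n → ℝ) : pExt f (-x) = pExt f x := by
  have key : ∀ y : Fin n → ℝ, pExt f (-y) ≤ pExt f y := by
    intro y
    refine le_ciInf fun ⟨m, z⟩ => ?_
    have := pExt_le f hhom hsub (-y) (m, -z)
    refine this.trans ?_
    rw [pval, pval]
    simp only
    rw [f_neg f hhom, cR_neg]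
    congr 2
    rw [show ((m:ℝ)+1) • (-y) - -cR z = -(((m:ℝ)+1) • y - cR z) by module, norm_neg]
  have h1 := key x
  have h2 := key (-x)
  rw [neg_neg] at h2
  linarith

include hhom hsub in
lemma pExt_nsmul (s : ℕ) (x : Fin n → ℝ) : pExt f ((s:ℝ) • x) = s * pExt f x := by
  rcases Nat.eq_zero_or_pos s with hs | hs
  · subst hs; simpa using pExt_zero f hhom hsub
  have hsR : (0:ℝ) < (s:ℝ) := by exact_mod_cast hs
  have scale : ∀ (m : ℕ) (z : Fin n → ℤ),
      pval f ((s:ℝ) • x) (m, (s:ℤ) • z) = s * pval f x (m, z) := by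
    intro m z
    rw [pval, pval]
    simp only
    have e1 : (f ((s:ℤ) • z) : ℝ) = s * (f z : ℝ) := by
      rw [hhom, abs_of_pos (by exact_mod_cast hs : (0:ℤ) < (s:ℤ))]
      push_cast; ring
    have e2 : ((m:ℝ)+1) • (s:ℝ) • x - cR ((s:ℤ) • z) = (s:ℝ) • (((m:ℝ)+1) • x - cR z) := by
      rw [cR_smul]; push_cast; module
    rw [e1, e2, norm_smul, Real.norm_eq_abs, abs_of_pos hsR]
    ring
  apply le_antisymm
  · -- pExt (s x) ≤ s * pExt x
    have h : ∀ mz : ℕ × (Fin n → ℤ), pExt f ((s:ℝ) • x) / s ≤ pval f x mz := by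
      rintro ⟨m, z⟩
      rw [div_le_iff₀ hsR, mul_comm, ← scale m z]
      exact pExt_le f hhom hsub _ _
    have h2 : pExt f ((s:ℝ) • x) / s ≤ pExt f x := le_ciInf h
    rw [div_le_iff₀ hsR] at h2
    linarith
  · -- s * pExt x ≤ pExt (s x)
    refine le_ciInf fun ⟨m, z⟩ => ?_
    have key := pExt_le f hhom hsub x ((m+1) * s - 1, z)
    have heq : pval f x ((m+1) * s - 1, z) = pval f ((s:ℝ) • x) (m, z) / s := by
      rw [pval, pval]
      simp only
      have h1 : 1 ≤ (m+1) * s := Nat.one_le_iff_ne_zero.mpr (by positivity)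
      have hms : (((m+1) * s - 1 : ℕ) : ℝ) + 1 = ((m:ℝ)+1) * s := by
        push_cast [Nat.cast_sub h1]; ring
      have e2 : ((((m+1) * s - 1 : ℕ) : ℝ) + 1) • x = ((m:ℝ)+1) • ((s:ℝ) • x) := by
        rw [hms, smul_smul]
      rw [e2, hms, div_div]
    rw [heq] at key
    rw [mul_comm]
    exact (le_div_iff₀ hsR).mp key

include hhom hsub in
lemma pExt_rat_nonneg (q : ℚ) (hq : 0 ≤ q) (x : Fin n → ℝ) :
    pExt f ((q:ℝ) • x) = (q:ℝ) * pExt f x := by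
  obtain ⟨s, hsnum⟩ : ∃ s : ℕ, q.num = (s:ℤ) :=
    ⟨q.num.toNat, (Int.toNat_of_nonneg (Rat.num_nonneg.mpr hq)).symm⟩
  have htpos : (0:ℝ) < (q.den:ℝ) := by exact_mod_cast q.den_pos
  have hnum : (q:ℝ) * (q.den:ℝ) = (s:ℝ) := by
    have h : q * (q.den:ℚ) = ((s:ℤ):ℚ) := by rw [Rat.mul_den_eq_num, hsnum]
    exact_mod_cast h
  have h1 : (q.den:ℝ) * pExt f ((q:ℝ) • x) = (s:ℝ) * pExt f x := by
    rw [← pExt_nsmul f hhom hsub q.den ((q:ℝ) • x), smul_smul, mul_comm ((q.den:ℝ)) ((q:ℝ)),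
      hnum, pExt_nsmul f hhom hsub s x]
  have hq' : (s:ℝ)/(q.den:ℝ) = (q:ℝ) := by
    rw [div_eq_iff (ne_of_gt htpos)]
    linarith [hnum]
  have h2 : pExt f ((q:ℝ)•x) = (s:ℝ)/(q.den:ℝ) * pExt f x := by
    rw [div_mul_eq_mul_div, eq_div_iff (ne_of_gt htpos)]
    linarith [h1]
  rw [h2, hq']

include hhom hsub in
lemma pExt_rat (q : ℚ) (x : Fin n → ℝ) :
    pExt f ((q:ℝ) • x) = |(q:ℝ)| * pExt f x := by
  rcases le_or_gt 0 q with hq | hq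
  · rw [pExt_rat_nonneg f hhom hsub q hq x, abs_of_nonneg (by exact_mod_cast hq)]
  · have h1 : ((-q : ℚ) : ℝ) • x = -((q:ℝ) • x) := by push_cast; module
    have h2 := pExt_rat_nonneg f hhom hsub (-q) (by linarith) x
    rw [h1, pExt_neg f hhom hsub] at h2
    rw [h2, abs_of_neg (by exact_mod_cast hq)]
    push_cast; ring

include hhom hsub in
lemma pExt_cont_line (x : Fin n → ℝ) : Continuous fun a : ℝ => pExt f (a • x) := by
  have hC := pC_nonneg f hhom hsub
  have hK : (0:ℝ) ≤ pC f * ‖x‖ := mul_nonneg hC (norm_nonneg x)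
  refine (LipschitzWith.of_dist_le_mul (K := Real.toNNReal (pC f * ‖x‖)) ?_).continuous
  intro a b
  rw [Real.dist_eq, Real.dist_eq, Real.coe_toNNReal _ hK]
  rw [abs_sub_le_iff]
  have hd : ∀ u v : ℝ, pExt f (u • x) - pExt f (v • x) ≤ pC f * ‖x‖ * |u - v| := by
    intro u v
    have := pExt_lip f hhom hsub (u • x) (v • x)
    have he : ‖u • x - v • x‖ = |u - v| * ‖x‖ := by
      rw [← sub_smul, norm_smul, Real.norm_eq_abs]
    rw [he] at this
    nlinarith [this]
  exact ⟨hd a b, by have := hd b a; rwa [abs_sub_comm] at this⟩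

include hhom hsub in
lemma pExt_smul (a : ℝ) (x : Fin n → ℝ) : pExt f (a • x) = |a| * pExt f x := by
  have hcont2 : Continuous fun a : ℝ => |a| * pExt f x :=
    continuous_abs.mul continuous_const
  have heq : (fun a : ℝ => pExt f (a • x)) ∘ ((↑) : ℚ → ℝ) =
      (fun a : ℝ => |a| * pExt f x) ∘ ((↑) : ℚ → ℝ) := by
    funext q
    exact pExt_rat f hhom hsub q x
  have := Rat.denseRange_cast.equalizer (pExt_cont_line f hhom hsub x) hcont2 heq
  exact congrFun this a

end hyps
end ThurstonExt

/-- An integer-valued, homogeneous and subadditive function on the lattice `ℤⁿ`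
extends to a seminorm on `ℝⁿ`. -/
theorem thurston_norm_extends (n : ℕ) (hn : 0 < n) (f : (Fin n → ℤ) → ℤ)
    (hhom : ∀ (k : ℤ) (x : Fin n → ℤ), f (k • x) = |k| * f x)
    (hsub : ∀ x y : Fin n → ℤ, f (x + y) ≤ f x + f y) :
    ∃ p : (Fin n → ℝ) → ℝ,
      (∀ (a : ℝ) (x : Fin n → ℝ), p (a • x) = |a| * p x) ∧
      (∀ x y : Fin n → ℝ, p (x + y) ≤ p x + p y) ∧
      (∀ x : Fin n → ℤ, p (fun i => (x i : ℝ)) = (f x : ℝ)) := by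
  exact ⟨ThurstonExt.pExt f,
    ThurstonExt.pExt_smul f hhom hsub,
    ThurstonExt.pExt_add f hhom hsub,
    fun x => ThurstonExt.pExt_int f hhom hsub x⟩
end

section
/- Let n be a positive integer and let p be a seminorm on ℝⁿ such that p(x) is an integer for every x ∈ ℤⁿ. Then the zero set p⁻¹({0}) = {φ ∈ ℝⁿ : p(φ) = 0} equals the ℝ-linear span of the set {x ∈ ℤⁿ : p(x) = 0} of lattice points on which p vanishes. -/
/-- For a seminorm on `ℝⁿ` that is integer-valued on the lattice `ℤⁿ`,
the zero set of the seminorm is the real span of the lattice points on which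
the seminorm vanishes. -/
theorem seminorm_zero_set_eq_span_lattice (n : ℕ) (hn : 0 < n)
    (p : (Fin n → ℝ) → ℝ)
    (hp1 : ∀ (a : ℝ) (x : Fin n → ℝ), p (a • x) = |a| * p x)
    (hp2 : ∀ x y : Fin n → ℝ, p (x + y) ≤ p x + p y)
    (hint : ∀ x : Fin n → ℤ, ∃ m : ℤ, p (fun i => (x i : ℝ)) = (m : ℝ)) :
    {φ : Fin n → ℝ | p φ = 0} =
      ↑(Submodule.span ℝ
        {φ : Fin n → ℝ | (∃ x : Fin n → ℤ, φ = fun i => (x i : ℝ)) ∧ p φ = 0}) := by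
  classical
  set S : Set (Fin n → ℝ) :=
    {φ : Fin n → ℝ | (∃ x : Fin n → ℤ, φ = fun i => (x i : ℝ)) ∧ p φ = 0} with hS
  -- basic facts about p
  have hp0 : p 0 = 0 := by
    have h := hp1 0 0
    simpa using h
  have hnn : ∀ x, 0 ≤ p x := by
    intro x
    have h1 : p (x + (-1 : ℝ) • x) ≤ p x + p ((-1 : ℝ) • x) := hp2 _ _
    have h2 : x + (-1 : ℝ) • x = 0 := by
      ext i; simp
    rw [h2, hp0, hp1] at h1
    simp only [abs_neg, abs_one, one_mul] at h1
    linarith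
  -- the zero set is a submodule
  have hK_add : ∀ a b : Fin n → ℝ, p a = 0 → p b = 0 → p (a + b) = 0 := by
    intro a b ha hb
    have h := hp2 a b
    rw [ha, hb] at h
    exact le_antisymm (by linarith) (hnn _)
  -- subadditivity over finite sums
  have hsum : ∀ (s : Finset (Fin n)) (f : Fin n → Fin n → ℝ),
      p (∑ i ∈ s, f i) ≤ ∑ i ∈ s, p (f i) := by
    intro s f
    induction s using Finset.cons_induction with
    | empty => simp [hp0]
    | cons a s ha ih =>
      rw [Finset.sum_cons, Finset.sum_cons]
      calc p (f a + ∑ i ∈ s, f i) ≤ p (f a) + p (∑ i ∈ s, f i) := hp2 _ _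
        _ ≤ p (f a) + ∑ i ∈ s, p (f i) := by linarith
  -- bound: p v ≤ ∑ |v i| * p (e i)
  have hbound : ∀ v : Fin n → ℝ, p v ≤ ∑ i, |v i| * p (Pi.single i 1) := by
    intro v
    have hv : v = ∑ i, v i • (Pi.single i 1 : Fin n → ℝ) := by
      ext j
      rw [Finset.sum_apply]
      simp [Pi.single_apply, mul_comm]
    calc p v = p (∑ i, v i • (Pi.single i 1 : Fin n → ℝ)) := by rw [← hv]
      _ ≤ ∑ i, p (v i • (Pi.single i 1 : Fin n → ℝ)) := hsum _ _
      _ = ∑ i, |v i| * p (Pi.single i 1) := by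
          refine Finset.sum_congr rfl fun i _ => hp1 _ _
  set C : ℝ := ∑ i, p (Pi.single i 1) with hC
  have hC0 : 0 ≤ C := Finset.sum_nonneg fun i _ => hnn _
  ext φ
  simp only [Set.mem_setOf_eq, SetLike.mem_coe]
  constructor
  · -- hard direction
    intro hφ
    have hclosed : IsClosed ((Submodule.span ℝ S : Submodule ℝ (Fin n → ℝ)) : Set (Fin n → ℝ)) :=
      Submodule.closed_of_finiteDimensional _
    have : φ ∈ closure ((Submodule.span ℝ S : Submodule ℝ (Fin n → ℝ)) : Set (Fin n → ℝ)) := by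
      rw [Metric.mem_closure_iff]
      intro ε hε
      -- choose a small parameter
      set ε0 : ℝ := min ε (1 / (C + 1)) with hε0def
      have hε0 : 0 < ε0 := lt_min hε (by positivity)
      obtain ⟨N, hN⟩ := exists_nat_one_div_lt hε0
      set N' : ℕ := N + 1 with hN'
      have hN'0 : (0 : ℝ) < N' := by positivity
      have hN'lt : 1 / (N' : ℝ) < ε0 := by
        simpa [hN'] using hN
      -- pigeonhole on the torus
      set f : ℕ → Fin n → Fin N' := fun m i =>
        ⟨(⌊Int.fract ((m : ℝ) * φ i) * N'⌋).toNat, by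
          have h0 : (0 : ℝ) ≤ Int.fract ((m : ℝ) * φ i) := Int.fract_nonneg _
          have h1 : Int.fract ((m : ℝ) * φ i) < 1 := Int.fract_lt_one _
          have h2 : Int.fract ((m : ℝ) * φ i) * N' < N' := by nlinarith
          have h3 : ⌊Int.fract ((m : ℝ) * φ i) * N'⌋ < (N' : ℤ) := by
            rw [Int.floor_lt]; exact_mod_cast h2
          omega⟩ with hf
      obtain ⟨m1, m2, hne, hfe⟩ := Finite.exists_ne_map_eq_of_infinite f
      wlog hlt : m1 < m2 generalizing m1 m2
      · exact this m2 m1 hne.symm hfe.symm (by omega)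
      -- the lattice point
      set q : ℕ := m2 - m1 with hq
      have hq1 : 1 ≤ q := by omega
      set x : Fin n → ℤ := fun i => ⌊(m2 : ℝ) * φ i⌋ - ⌊(m1 : ℝ) * φ i⌋ with hx
      have key : ∀ i, |(q : ℝ) * φ i - (x i : ℝ)| < 1 / N' := by
        intro i
        have hfe' : (⌊Int.fract ((m1 : ℝ) * φ i) * N'⌋).toNat
            = (⌊Int.fract ((m2 : ℝ) * φ i) * N'⌋).toNat := by
          have := congrFun hfe i
          simpa [hf] using congrArg Fin.val this
        have hnn1 : (0 : ℤ) ≤ ⌊Int.fract ((m1 : ℝ) * φ i) * N'⌋ :=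
          Int.floor_nonneg.2 (mul_nonneg (Int.fract_nonneg _) hN'0.le)
        have hnn2 : (0 : ℤ) ≤ ⌊Int.fract ((m2 : ℝ) * φ i) * N'⌋ :=
          Int.floor_nonneg.2 (mul_nonneg (Int.fract_nonneg _) hN'0.le)
        have hfloors : ⌊Int.fract ((m1 : ℝ) * φ i) * N'⌋
            = ⌊Int.fract ((m2 : ℝ) * φ i) * N'⌋ := by omega
        set u : ℝ := Int.fract ((m1 : ℝ) * φ i) with hu
        set v : ℝ := Int.fract ((m2 : ℝ) * φ i) with hvv
        have h1 : (⌊u * N'⌋ : ℝ) ≤ u * N' := Int.floor_le _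
        have h2 : u * N' < ⌊u * N'⌋ + 1 := Int.lt_floor_add_one _
        have h3 : (⌊v * N'⌋ : ℝ) ≤ v * N' := Int.floor_le _
        have h4 : v * N' < ⌊v * N'⌋ + 1 := Int.lt_floor_add_one _
        have h5 : |v * N' - u * N'| < 1 := by
          rw [hfloors] at h1 h2
          rw [abs_lt]; constructor <;> linarith
        have h6 : |v - u| < 1 / N' := by
          rw [lt_div_iff₀ hN'0]
          have heq2 : (v - u) * N' = v * N' - u * N' := by ring
          calc |v - u| * N' = |(v - u) * N'| := by rw [abs_mul, abs_of_pos hN'0]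
            _ = |v * N' - u * N'| := by rw [heq2]
            _ < 1 := h5
        have heq : (q : ℝ) * φ i - (x i : ℝ) = v - u := by
          have e1 : u = (m1 : ℝ) * φ i - ⌊(m1 : ℝ) * φ i⌋ := (Int.self_sub_floor _).symm
          have e2 : v = (m2 : ℝ) * φ i - ⌊(m2 : ℝ) * φ i⌋ := (Int.self_sub_floor _).symm
          have e3 : (q : ℝ) = (m2 : ℝ) - (m1 : ℝ) := by
            rw [hq]; push_cast [Nat.cast_sub hlt.le]; ring
          rw [e1, e2, e3, hx]
          push_cast
          ring
        rw [heq]; exact h6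
      -- the lattice point is in S
      have hxle : p (fun i => (x i : ℝ)) < 1 := by
        have h1 : p (fun i => (x i : ℝ)) ≤ p ((q : ℝ) • φ)
            + p ((fun i => (x i : ℝ)) - (q : ℝ) • φ) := by
          have h := hp2 ((q : ℝ) • φ) ((fun i => (x i : ℝ)) - (q : ℝ) • φ)
          rwa [add_sub_cancel] at h
        have h2 : p ((q : ℝ) • φ) = 0 := by rw [hp1, hφ, mul_zero]
        have h3 : p ((fun i => (x i : ℝ)) - (q : ℝ) • φ) ≤ (1 / N') * C := by
          calc p ((fun i => (x i : ℝ)) - (q : ℝ) • φ)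
              ≤ ∑ i, |((fun i => (x i : ℝ)) - (q : ℝ) • φ) i| * p (Pi.single i 1) :=
                hbound _
            _ ≤ ∑ i, (1 / N') * p (Pi.single i 1) := by
                refine Finset.sum_le_sum fun i _ => ?_
                have : |((fun i => (x i : ℝ)) - (q : ℝ) • φ) i| ≤ 1 / N' := by
                  have := key i
                  simp only [Pi.sub_apply, Pi.smul_apply, smul_eq_mul]
                  rw [abs_sub_comm]
                  linarith
                exact mul_le_mul_of_nonneg_right this (hnn _)
            _ = (1 / N') * C := by rw [hC, ← Finset.mul_sum]
        have h4 : (1 / N' : ℝ) * C < 1 := by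
          have hle : (1 / N' : ℝ) ≤ 1 / (C + 1) := le_of_lt (lt_of_lt_of_le hN'lt (min_le_right _ _))
          have h5 : (1 / N' : ℝ) * C ≤ (1 / (C + 1)) * C :=
            mul_le_mul_of_nonneg_right hle hC0
          have h6 : (1 / (C + 1) : ℝ) * C < 1 := by
            rw [div_mul_eq_mul_div, div_lt_one (by positivity)]; linarith
          linarith
        linarith
      have hx0 : p (fun i => (x i : ℝ)) = 0 := by
        obtain ⟨m, hm⟩ := hint x
        have h0 : (0 : ℝ) ≤ (m : ℝ) := hm ▸ hnn _
        have h1 : (m : ℝ) < 1 := hm ▸ hxle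
        have h0' : (0 : ℤ) ≤ m := by exact_mod_cast h0
        have h1' : m < 1 := by exact_mod_cast h1
        have hm0 : m = 0 := by omega
        rw [hm, hm0]; norm_num
      have hxS : (fun i => (x i : ℝ)) ∈ S := ⟨⟨x, rfl⟩, hx0⟩
      refine ⟨(1 / q : ℝ) • (fun i => (x i : ℝ)), ?_, ?_⟩
      · exact Submodule.smul_mem _ _ (Submodule.subset_span hxS)
      · rw [dist_pi_lt_iff hε]
        intro i
        rw [Real.dist_eq]
        have hq0 : (0 : ℝ) < q := by exact_mod_cast hq1
        have : φ i - ((1 / q : ℝ) • fun i => (x i : ℝ)) i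
            = ((q : ℝ) * φ i - x i) / q := by
          simp only [Pi.smul_apply, smul_eq_mul]
          field_simp
        rw [this, abs_div, abs_of_pos hq0]
        have h1 : |(q : ℝ) * φ i - x i| < 1 / N' := key i
        have h2 : |(q : ℝ) * φ i - x i| / q ≤ |(q : ℝ) * φ i - x i| := by
          rw [div_le_iff₀ hq0]
          have hq1' : (1 : ℝ) ≤ q := by exact_mod_cast hq1
          nlinarith [abs_nonneg ((q : ℝ) * φ i - (x i : ℝ))]
        have h3 : (1 / N' : ℝ) < ε := lt_of_lt_of_le hN'lt (min_le_left _ _)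
        linarith
    rw [hclosed.closure_eq] at this
    exact this
  · -- easy direction: span ⊆ zero set
    intro hφ
    let K : Submodule ℝ (Fin n → ℝ) :=
      { carrier := {ψ | p ψ = 0}
        zero_mem' := hp0
        add_mem' := fun {a b} ha hb => hK_add a b ha hb
        smul_mem' := by
          intro a ψ hψ
          simp only [Set.mem_setOf_eq] at *
          rw [hp1, hψ, mul_zero] }
    have hle : Submodule.span ℝ S ≤ K := Submodule.span_le.2 fun ψ hψ => hψ.2
    exact hle hφ
end

section
/- Let n be a positive integer and let p be a seminorm on ℝⁿ such that p(x) is an integer for every x ∈ ℤⁿ. Then there exist finitely many lattice points α₁, …, α_k ∈ ℤⁿ such that {φ ∈ ℝⁿ : p(φ) ≤ 1} = {φ ∈ ℝⁿ : |⟨φ, α_i⟩| ≤ 1 for all 1 ≤ i ≤ k}, where ⟨·,·⟩ denotes the standard inner product on ℝⁿ. -/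
namespace Thurston

variable {n : ℕ}

structure SubFn (P : (Fin n → ℤ) → ℤ) where
  q : (Fin n → ℤ) → ℤ
  sub : ∀ y z, q (y + z) ≤ q y + q z
  hom : ∀ (k : ℕ) (y), q (k • y) = k * q y
  le : ∀ y, q y ≤ P y

namespace SubFn

variable {P : (Fin n → ℤ) → ℤ}

theorem zero (Q : SubFn P) : Q.q 0 = 0 := by simpa using Q.hom 0 0

theorem pair_nonneg (Q : SubFn P) (y : Fin n → ℤ) : 0 ≤ Q.q y + Q.q (-y) := by
  have h := Q.sub y (-y)
  rw [add_neg_cancel, Q.zero] at h; linarith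

/-- the squeezing predicate -/
def SqSet (Q : SubFn P) (v y : Fin n → ℤ) (z : ℤ) : Prop :=
  ∃ k : ℕ, z = Q.q (k • v + y) - k * Q.q v

theorem sqset_bdd (Q : SubFn P) (v y : Fin n → ℤ) :
    ∀ z : ℤ, Q.SqSet v y z → -(Q.q (-y)) ≤ z := by
  rintro z ⟨k, rfl⟩
  have h1 : Q.q (k • v) ≤ Q.q (k • v + y) + Q.q (-y) := by
    have := Q.sub (k • v + y) (-y)
    simpa using this
  have h2 : Q.q (k • v) = k * Q.q v := Q.hom k v
  linarith

theorem exists_min (Q : SubFn P) (v y : Fin n → ℤ) :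
    ∃ lb : ℤ, Q.SqSet v y lb ∧ ∀ z : ℤ, Q.SqSet v y z → lb ≤ z :=
  Int.exists_least_of_bdd ⟨-(Q.q (-y)), Q.sqset_bdd v y⟩ ⟨Q.q y, 0, by simp⟩

/-- the squeezed value -/
noncomputable def sqv (Q : SubFn P) (v y : Fin n → ℤ) : ℤ :=
  (Q.exists_min v y).choose

theorem sqv_mem (Q : SubFn P) (v y : Fin n → ℤ) : Q.SqSet v y (Q.sqv v y) :=
  (Q.exists_min v y).choose_spec.1

theorem sqv_le (Q : SubFn P) (v y : Fin n → ℤ) (k : ℕ) :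
    Q.sqv v y ≤ Q.q (k • v + y) - k * Q.q v :=
  (Q.exists_min v y).choose_spec.2 _ ⟨k, rfl⟩

theorem sqv_le_q (Q : SubFn P) (v y : Fin n → ℤ) : Q.sqv v y ≤ Q.q y := by
  have := Q.sqv_le v y 0; simpa using this

theorem sqv_sub (Q : SubFn P) (v : Fin n → ℤ) (y z : Fin n → ℤ) :
    Q.sqv v (y + z) ≤ Q.sqv v y + Q.sqv v z := by
  obtain ⟨k, hk⟩ := Q.sqv_mem v y
  obtain ⟨l, hl⟩ := Q.sqv_mem v z
  have h := Q.sqv_le v (y + z) (k + l)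
  have hsum : ((k + l) • v : Fin n → ℤ) + (y + z) = (k • v + y) + (l • v + z) := by
    rw [add_smul]; abel
  have hsub := Q.sub (k • v + y) (l • v + z)
  rw [hsum] at h
  push_cast at h ⊢
  nlinarith [h, hsub]

theorem sqv_zero (Q : SubFn P) (v : Fin n → ℤ) : Q.sqv v 0 = 0 := by
  have h1 := Q.sqv_le v 0 0
  obtain ⟨k, hk⟩ := Q.sqv_mem v 0
  have : Q.q (k • v + 0) = k * Q.q v := by simpa using Q.hom k v
  simp only [this] at hk
  simp at h1 hk
  omega

theorem sqv_hom (Q : SubFn P) (v : Fin n → ℤ) (m : ℕ) (y : Fin n → ℤ) :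
    Q.sqv v (m • y) = m * Q.sqv v y := by
  rcases Nat.eq_zero_or_pos m with rfl | hm
  · simpa using Q.sqv_zero v
  apply le_antisymm
  · obtain ⟨k₀, hk₀⟩ := Q.sqv_mem v y
    have h := Q.sqv_le v (m • y) (m * k₀)
    have he : ((m * k₀) • v : Fin n → ℤ) + m • y = m • (k₀ • v + y) := by
      rw [smul_add, mul_smul]
    rw [he, Q.hom m (k₀ • v + y)] at h
    calc Q.sqv v (m • y) ≤ m * Q.q (k₀ • v + y) - (m * k₀) * Q.q v := by exact_mod_cast h
    _ = m * Q.sqv v y := by rw [hk₀]; push_cast; ring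
  · obtain ⟨k, hk⟩ := Q.sqv_mem v (m • y)
    have hle : k ≤ m * k := by
      calc k = 1 * k := (one_mul k).symm
      _ ≤ m * k := Nat.mul_le_mul_right k hm
    obtain ⟨j, hj⟩ : ∃ j, m * k = k + j := ⟨m * k - k, by omega⟩
    have h1 : (m : ℤ) * Q.sqv v y ≤ m * Q.q (k • v + y) - (m * k) * Q.q v := by
      have h := Q.sqv_le v y k
      have hm' : (0:ℤ) < m := by exact_mod_cast hm
      nlinarith [h]
    have h2 : (m:ℤ) * Q.q (k • v + y) = Q.q (k • v + m • y + j • v) := by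
      rw [← Q.hom m (k • v + y)]
      congr 1
      rw [smul_add, ← mul_smul, hj, add_smul]
      abel
    have h3 : Q.q (k • v + m • y + j • v) ≤ Q.q (k • v + m • y) + j * Q.q v := by
      have h := Q.sub (k • v + m • y) (j • v)
      rw [Q.hom j v] at h
      exact h
    have hjz : (j:ℤ) = (m:ℤ) * k - k := by
      rw [← Nat.cast_mul, hj]; push_cast; ring
    have h4 : (j:ℤ) * Q.q v = (m:ℤ)*k*Q.q v - k*Q.q v := by rw [hjz]; ring
    rw [hk]
    linarith [h1, h2, h3, h4]

/-- The squeeze of `Q` at `v`. -/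
noncomputable def squeeze (Q : SubFn P) (v : Fin n → ℤ) : SubFn P where
  q := Q.sqv v
  sub := Q.sqv_sub v
  hom := fun k y => Q.sqv_hom v k y
  le := fun y => le_trans (Q.sqv_le_q v y) (Q.le y)

theorem squeeze_le (Q : SubFn P) (v y : Fin n → ℤ) : (Q.squeeze v).q y ≤ Q.q y :=
  Q.sqv_le_q v y

theorem squeeze_pin_self (Q : SubFn P) (v : Fin n → ℤ) : (Q.squeeze v).q v = Q.q v := by
  apply le_antisymm (Q.squeeze_le v v)
  obtain ⟨k, hk⟩ := Q.sqv_mem v v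
  have he : (k • v : Fin n → ℤ) + v = (k+1) • v := by rw [add_smul, one_smul]
  rw [he, Q.hom (k+1) v] at hk
  show Q.q v ≤ Q.sqv v v
  rw [hk]; push_cast; ring_nf; omega

theorem squeeze_pin_neg (Q : SubFn P) (v : Fin n → ℤ) : (Q.squeeze v).q (-v) = -(Q.q v) := by
  apply le_antisymm
  · show Q.sqv v (-v) ≤ -Q.q v
    have := Q.sqv_le v (-v) 1
    simpa [Q.zero] using this
  · obtain ⟨k, hk⟩ := Q.sqv_mem v (-v)
    show -Q.q v ≤ Q.sqv v (-v)
    rw [hk]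
    rcases Nat.eq_zero_or_pos k with rfl | hkp
    · have := Q.pair_nonneg v; simp; linarith
    · have he : (k • v : Fin n → ℤ) + (-v) = (k-1) • v := by
        have : (k:ℤ) • (v : Fin n → ℤ) - v = ((k:ℤ)-1) • v := by rw [sub_smul, one_smul]
        rw [show (k • v : Fin n → ℤ) = (k:ℤ) • v by simp, show ((k-1 : ℕ) • v : Fin n → ℤ) = ((k-1:ℕ):ℤ) • v by simp]
        push_cast [Nat.cast_sub hkp]
        rw [← this]; abel
      rw [he, Q.hom (k-1) v]
      have h4 : ((k - 1 : ℕ) : ℤ) = (k:ℤ) - 1 := by omega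
      rw [h4]; ring_nf; omega

theorem pin_hom (Q : SubFn P) (w : Fin n → ℤ) (h : Q.q w + Q.q (-w) = 0) (m : ℤ) :
    Q.q (m • w) = m * Q.q w := by
  rcases le_or_gt 0 m with hm | hm
  · have he : m • w = m.toNat • w := by
      rw [← natCast_zsmul, Int.toNat_of_nonneg hm]
    rw [he, Q.hom m.toNat w, Int.toNat_of_nonneg hm]
  · have he : m • w = (-m).toNat • (-w) := by
      have : ((-m).toNat : ℤ) = -m := Int.toNat_of_nonneg (by omega)
      rw [← natCast_zsmul, this]
      simp
    rw [he, Q.hom (-m).toNat (-w)]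
    have h2 : ((-m).toNat : ℤ) = -m := Int.toNat_of_nonneg (by omega)
    rw [h2]
    have : Q.q (-w) = -Q.q w := by omega
    rw [this]; ring

theorem q_sum_le (Q : SubFn P) (s : Finset (Fin n)) (f : Fin n → (Fin n → ℤ)) :
    Q.q (∑ i ∈ s, f i) ≤ ∑ i ∈ s, Q.q (f i) := by
  classical
  induction s using Finset.induction_on with
  | empty => simp [Q.zero]
  | insert _ _ hx ih =>
    rename_i a t
    rw [Finset.sum_insert hx, Finset.sum_insert hx]
    exact le_trans (Q.sub _ _) (by linarith)

end SubFn

open SubFn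

variable {P : (Fin n → ℤ) → ℤ}

/-- Iterated squeezing along a list of directions. -/
noncomputable def foldSq (Q : SubFn P) : List (Fin n → ℤ) → SubFn P
  | [] => Q
  | v :: l => foldSq (Q.squeeze v) l

theorem foldSq_le (l : List (Fin n → ℤ)) (Q : SubFn P) (y : Fin n → ℤ) :
    (foldSq Q l).q y ≤ Q.q y := by
  induction l generalizing Q with
  | nil => exact le_refl _
  | cons v l ih => exact le_trans (ih (Q.squeeze v)) (Q.squeeze_le v y)

theorem foldSq_pin (l : List (Fin n → ℤ)) (Q : SubFn P) (w : Fin n → ℤ)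
    (h : Q.q w + Q.q (-w) = 0) :
    (foldSq Q l).q w = Q.q w ∧ (foldSq Q l).q (-w) = Q.q (-w) := by
  induction l generalizing Q with
  | nil => exact ⟨rfl, rfl⟩
  | cons v l ih =>
    have h1 : (Q.squeeze v).q w ≤ Q.q w := Q.squeeze_le v w
    have h2 : (Q.squeeze v).q (-w) ≤ Q.q (-w) := Q.squeeze_le v (-w)
    have h3 : 0 ≤ (Q.squeeze v).q w + (Q.squeeze v).q (-w) := (Q.squeeze v).pair_nonneg w
    have hw : (Q.squeeze v).q w = Q.q w := by omega
    have hw' : (Q.squeeze v).q (-w) = Q.q (-w) := by omega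
    have := ih (Q.squeeze v) (by omega)
    exact ⟨this.1.trans hw, this.2.trans hw'⟩

theorem foldSq_mem (l : List (Fin n → ℤ)) (Q : SubFn P) (v : Fin n → ℤ) (hv : v ∈ l) :
    (foldSq Q l).q v + (foldSq Q l).q (-v) = 0 := by
  induction l generalizing Q with
  | nil => simp at hv
  | cons w l ih =>
    rcases List.mem_cons.1 hv with rfl | hv'
    · have hpin : (Q.squeeze v).q v + (Q.squeeze v).q (-v) = 0 := by
        rw [Q.squeeze_pin_self v, Q.squeeze_pin_neg v]; ring
      have h := foldSq_pin l (Q.squeeze v) v hpin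
      show (foldSq (Q.squeeze v) l).q v + (foldSq (Q.squeeze v) l).q (-v) = 0
      rw [h.1, h.2]
      exact hpin
    · exact ih (Q.squeeze w) hv'

/-- Integer dot product on the lattice. -/
def dotZ (y β : Fin n → ℤ) : ℤ := ∑ i, y i * β i

theorem dotZ_neg (y β : Fin n → ℤ) : dotZ (-y) β = -dotZ y β := by
  simp [dotZ, ← Finset.sum_neg_distrib]

/-- Key existence: for each lattice point `x` there is an integral dual vector `α`
dominated by `P` everywhere and achieving `P x` at `x`. -/
theorem exists_dual (P : (Fin n → ℤ) → ℤ) (B : SubFn P) (hB : ∀ y, B.q y = P y)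
    (x : Fin n → ℤ) :
    ∃ α : Fin n → ℤ, (∀ y, dotZ y α ≤ P y) ∧ dotZ x α = P x := by
  classical
  set F := foldSq (B.squeeze x) (List.ofFn fun i : Fin n => Pi.single i 1) with hF
  set α : Fin n → ℤ := fun i => F.q (Pi.single i 1) with hα
  have hpin : ∀ i : Fin n, F.q (Pi.single i 1) + F.q (-(Pi.single i 1)) = 0 := by
    intro i
    apply foldSq_mem
    simp [List.mem_ofFn]
  have hdecomp : ∀ y : Fin n → ℤ, y = ∑ i, (y i) • (Pi.single i 1 : Fin n → ℤ) := by
    intro y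
    have h1 : ∀ i, (y i) • (Pi.single i 1 : Fin n → ℤ) = Pi.single i (y i) := by
      intro i
      rw [← Pi.single_smul]
      simp
    simp_rw [h1]
    rw [Finset.univ_sum_single]
  have hupper : ∀ y, F.q y ≤ dotZ y α := by
    intro y
    calc F.q y = F.q (∑ i, (y i) • (Pi.single i 1 : Fin n → ℤ)) := by rw [← hdecomp]
    _ ≤ ∑ i, F.q ((y i) • (Pi.single i 1 : Fin n → ℤ)) := F.q_sum_le _ _
    _ = ∑ i, (y i) * α i := by
        apply Finset.sum_congr rfl
        intro i _
        exact F.pin_hom _ (hpin i) (y i)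
    _ = dotZ y α := rfl
  have hdot : ∀ y, F.q y = dotZ y α := by
    intro y
    have h1 := hupper y
    have h2 := hupper (-y)
    rw [dotZ_neg] at h2
    have h3 := F.pair_nonneg y
    omega
  have hxpin : (B.squeeze x).q x + (B.squeeze x).q (-x) = 0 := by
    rw [B.squeeze_pin_self x, B.squeeze_pin_neg x]; ring
  refine ⟨α, ?_, ?_⟩
  · intro y
    rw [← hdot y]
    exact F.le y
  · rw [← hdot x]
    have h := foldSq_pin (List.ofFn fun i : Fin n => Pi.single i 1) (B.squeeze x) x hxpin
    rw [hF]
    rw [h.1, B.squeeze_pin_self x, hB x]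

end Thurston

open Thurston in
/-- The unit ball of a seminorm on `ℝⁿ` that is integer-valued on the lattice `ℤⁿ`
is cut out by finitely many integral linear inequalities. -/
theorem seminorm_unit_ball_integral_inequalities (n : ℕ) (hn : 0 < n)
    (p : (Fin n → ℝ) → ℝ)
    (hp1 : ∀ (a : ℝ) (x : Fin n → ℝ), p (a • x) = |a| * p x)
    (hp2 : ∀ x y : Fin n → ℝ, p (x + y) ≤ p x + p y)
    (hint : ∀ x : Fin n → ℤ, ∃ m : ℤ, p (fun i => (x i : ℝ)) = (m : ℝ)) :
    ∃ (k : ℕ) (α : Fin k → Fin n → ℤ),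
      {φ : Fin n → ℝ | p φ ≤ 1} =
        {φ : Fin n → ℝ | ∀ i : Fin k, |∑ j, φ j * (α i j : ℝ)| ≤ 1} := by
  classical
  -- basic facts about the seminorm
  have p0 : p 0 = 0 := by simpa using hp1 0 0
  have pneg : ∀ φ, p (-φ) = p φ := by
    intro φ; have := hp1 (-1) φ; simpa using this
  have pnonneg : ∀ φ, 0 ≤ p φ := by
    intro φ
    have h := hp2 φ (-φ)
    rw [add_neg_cancel, p0, pneg] at h; linarith
  have hplip : ∀ u v : Fin n → ℝ, p u ≤ p v + p (u - v) := by
    intro u v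
    have := hp2 v (u - v)
    simpa using this
  -- sum bound for p
  have psum_le : ∀ (s : Finset (Fin n)) (f : Fin n → (Fin n → ℝ)),
      p (∑ i ∈ s, f i) ≤ ∑ i ∈ s, p (f i) := by
    intro s f
    induction s using Finset.induction_on with
    | empty => simp [p0]
    | insert _ _ hx ih =>
      rename_i a t
      rw [Finset.sum_insert hx, Finset.sum_insert hx]
      exact le_trans (hp2 _ _) (by linarith)
  have hpbound : ∀ w : Fin n → ℝ, p w ≤ ∑ i, |w i| * p (Pi.single i 1) := by
    intro w
    have hdec : w = ∑ i, Pi.single i (w i) := (Finset.univ_sum_single w).symm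
    have h1 : ∀ i, (Pi.single i (w i) : Fin n → ℝ) = w i • (Pi.single i 1 : Fin n → ℝ) := by
      intro i
      funext j
      by_cases h : j = i <;> simp [Pi.single_apply, h]
    calc p w = p (∑ i, Pi.single i (w i)) := by rw [← hdec]
    _ ≤ ∑ i, p (Pi.single i (w i)) := psum_le _ _
    _ = ∑ i, |w i| * p (Pi.single i 1) := by
        apply Finset.sum_congr rfl
        intro i _
        rw [h1 i, hp1]

  -- the integer-valued restriction P
  choose P hP using hint
  set c : (Fin n → ℤ) → (Fin n → ℝ) := fun y i => (y i : ℝ) with hc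
  have hcp : ∀ y, p (c y) = (P y : ℝ) := fun y => hP y
  have hcadd : ∀ y z, c (y + z) = c y + c z := by
    intro y z; funext i; simp [hc]
  have hcneg : ∀ y, c (-y) = -(c y) := by
    intro y; funext i; simp [hc]
  have hcsmul : ∀ (k : ℕ) (y), c (k • y) = (k : ℝ) • c y := by
    intro k y; funext i; simp [hc]
  have Psub : ∀ y z, P (y + z) ≤ P y + P z := by
    intro y z
    have h : p (c (y+z)) ≤ p (c y) + p (c z) := by rw [hcadd]; exact hp2 _ _
    rw [hcp, hcp, hcp] at h
    exact_mod_cast h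
  have Phom : ∀ (k : ℕ) (y), P (k • y) = k * P y := by
    intro k y
    have h : p (c (k • y)) = (k:ℝ) * p (c y) := by
      rw [hcsmul, hp1, abs_of_nonneg (by positivity : (0:ℝ) ≤ (k:ℝ))]
    rw [hcp, hcp] at h
    exact_mod_cast h
  have Pnonneg : ∀ y, 0 ≤ P y := by
    intro y
    have := pnonneg (c y)
    rw [hcp] at this
    exact_mod_cast this
  have Pneg : ∀ y, P (-y) = P y := by
    intro y
    have h : p (c (-y)) = p (c y) := by rw [hcneg, pneg]
    rw [hcp, hcp] at h
    exact_mod_cast h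
  -- the SubFn structure on P and the dual vectors
  set B : Thurston.SubFn P := ⟨P, Psub, Phom, fun y => le_refl _⟩ with hB
  have hdual := Thurston.exists_dual P B (fun _ => rfl)
  -- the finite set of integral dual vectors
  set Sfin : Finset (Fin n → ℤ) :=
    Finset.filter (fun β => ∀ y, Thurston.dotZ y β ≤ P y)
      (Finset.Icc (fun i => -(P (Pi.single i 1))) (fun i => P (Pi.single i 1))) with hSfin
  have hsingle : ∀ (i : Fin n) (β : Fin n → ℤ), Thurston.dotZ (Pi.single i 1) β = β i := by
    intro i β
    rw [Thurston.dotZ]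
    rw [Finset.sum_eq_single i]
    · simp
    · intro j _ hj; simp [Pi.single_apply, hj]
    · intro h; exact absurd (Finset.mem_univ i) h
  have hmem : ∀ β, β ∈ Sfin ↔ ∀ y, Thurston.dotZ y β ≤ P y := by
    intro β
    constructor
    · intro h; exact (Finset.mem_filter.1 h).2
    · intro h
      rw [hSfin, Finset.mem_filter]
      refine ⟨Finset.mem_Icc.2 ⟨?_, ?_⟩, h⟩
      · intro i
        have h1 := h (-(Pi.single i 1))
        rw [Thurston.dotZ_neg, hsingle, Pneg] at h1
        simpa using (by omega : -(P (Pi.single i 1)) ≤ β i)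
      · intro i
        have h1 := h (Pi.single i 1)
        rw [hsingle] at h1
        exact h1
  have hbox : ∀ β ∈ Sfin, ∀ j, |β j| ≤ P (Pi.single j 1) := by
    intro β hβ j
    have h := (hmem β).1 hβ
    have h1 := h (Pi.single j 1)
    have h2 := h (-(Pi.single j 1))
    rw [hsingle] at h1
    rw [Thurston.dotZ_neg, hsingle, Pneg] at h2
    rw [abs_le]; omega
  -- the answer
  refine ⟨Sfin.card, fun i => (Sfin.equivFin.symm i : Fin n → ℤ), ?_⟩
  set α : Fin Sfin.card → Fin n → ℤ := fun i => (Sfin.equivFin.symm i : Fin n → ℤ) with hα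
  have hα_mem : ∀ i, α i ∈ Sfin := fun i => (Sfin.equivFin.symm i).2
  have hα_surj : ∀ β ∈ Sfin, ∃ i, α i = β := by
    intro β hβ
    exact ⟨Sfin.equivFin ⟨β, hβ⟩, by rw [hα]; simp⟩
  -- real dot product notation
  set rdot : (Fin n → ℝ) → (Fin n → ℤ) → ℝ := fun φ β => ∑ j, φ j * (β j : ℝ) with hrdot
  have hrd_latt : ∀ y β, rdot (c y) β = (Thurston.dotZ y β : ℝ) := by
    intro y β
    rw [hrdot, Thurston.dotZ]
    push_cast
    rfl
  -- constants
  set Cp : ℝ := ∑ i, p (Pi.single i 1) with hCp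
  set Cβ : ℝ := ∑ i, (P (Pi.single i 1) : ℝ) with hCβ
  have hCp0 : 0 ≤ Cp := Finset.sum_nonneg fun i _ => pnonneg _
  have hCβ0 : 0 ≤ Cβ := Finset.sum_nonneg fun i _ => by exact_mod_cast Pnonneg _
  set K : ℝ := (Cp + Cβ)/2 with hK
  have hK0 : 0 ≤ K := by positivity
  -- the two key approximation estimates
  have approx : ∀ (φ : Fin n → ℝ) (m : ℕ), 0 < m →
      ∃ y : Fin n → ℤ,
        |p (c y) - (m:ℝ) * p φ| ≤ Cp/2 ∧
        ∀ β ∈ Sfin, |rdot (c y) β - (m:ℝ) * rdot φ β| ≤ Cβ/2 := by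
    intro φ m hm
    refine ⟨fun i => round ((m:ℝ) * φ i), ?_, ?_⟩
    · set y : Fin n → ℤ := fun i => round ((m:ℝ) * φ i) with hy
      set Δ : Fin n → ℝ := c y - (m:ℝ) • φ with hΔ
      have hΔb : ∀ j, |Δ j| ≤ 1/2 := by
        intro j
        rw [hΔ]
        simp only [Pi.sub_apply, Pi.smul_apply, smul_eq_mul, hc]
        rw [show ((y j : ℝ)) - (m:ℝ) * φ j = -(((m:ℝ) * φ j) - (y j : ℝ)) by ring, abs_neg]
        exact abs_sub_round _
      have hpΔ : p Δ ≤ Cp/2 := by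
        calc p Δ ≤ ∑ i, |Δ i| * p (Pi.single i 1) := hpbound Δ
        _ ≤ ∑ i, (1/2) * p (Pi.single i 1) := by
            apply Finset.sum_le_sum
            intro i _
            exact mul_le_mul_of_nonneg_right (hΔb i) (pnonneg _)
        _ = Cp/2 := by
            rw [hCp, Finset.sum_div]
            apply Finset.sum_congr rfl
            intro i _
            ring
      have hmφ : p ((m:ℝ) • φ) = (m:ℝ) * p φ := by
        rw [hp1, abs_of_nonneg (by positivity : (0:ℝ) ≤ (m:ℝ))]
      have h1 : p (c y) ≤ (m:ℝ) * p φ + Cp/2 := by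
        have := hplip (c y) ((m:ℝ) • φ)
        rw [hmφ] at this
        have h2 : c y - (m:ℝ) • φ = Δ := by rw [hΔ]
        rw [h2] at this
        linarith
      have h2 : (m:ℝ) * p φ ≤ p (c y) + Cp/2 := by
        have := hplip ((m:ℝ) • φ) (c y)
        rw [hmφ] at this
        have h3 : (m:ℝ) • φ - c y = -Δ := by rw [hΔ]; abel
        rw [h3, pneg] at this
        linarith
      rw [abs_le]; constructor <;> linarith
    · intro β hβ
      set y : Fin n → ℤ := fun i => round ((m:ℝ) * φ i) with hy
      have hlin : rdot (c y) β - (m:ℝ) * rdot φ β = ∑ j, (c y j - (m:ℝ) * φ j) * (β j : ℝ) := by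
        simp only [hrdot, Finset.mul_sum, ← Finset.sum_sub_distrib]
        apply Finset.sum_congr rfl
        intro j _
        ring
      rw [hlin]
      calc |∑ j, (c y j - (m:ℝ) * φ j) * (β j : ℝ)| ≤ ∑ j, |(c y j - (m:ℝ) * φ j) * (β j : ℝ)| :=
            Finset.abs_sum_le_sum_abs _ _
      _ ≤ ∑ j, (1/2) * (P (Pi.single j 1) : ℝ) := by
          apply Finset.sum_le_sum
          intro j _
          rw [abs_mul]
          apply mul_le_mul
          · rw [show c y j - (m:ℝ) * φ j = -(((m:ℝ) * φ j) - (c y j)) by ring, abs_neg]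
            exact abs_sub_round _
          · have := hbox β hβ j
            calc |(β j : ℝ)| = (|β j| : ℝ) := by push_cast; rfl
            _ ≤ (P (Pi.single j 1) : ℝ) := by exact_mod_cast this
          · positivity
          · positivity
      _ = Cβ/2 := by
          rw [hCβ, Finset.sum_div]
          apply Finset.sum_congr rfl
          intro j _
          ring
  -- rdot φ β ≤ p φ for β ∈ Sfin
  have hdom : ∀ β ∈ Sfin, ∀ φ, rdot φ β ≤ p φ := by
    intro β hβ φ
    apply le_of_forall_pos_le_add
    intro ε hε
    obtain ⟨m, hm⟩ := exists_nat_gt (K / ε)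
    have hm0 : 0 < m := by
      rcases Nat.eq_zero_or_pos m with rfl | h
      · exfalso
        have h0 : (0:ℝ) ≤ K / ε := div_nonneg hK0 hε.le
        simp at hm
        linarith
      · exact h
    have hm0' : (0:ℝ) < (m:ℝ) := by exact_mod_cast hm0
    have hKme : K < (m:ℝ) * ε := by
      have := (div_lt_iff₀ hε).1 hm
      linarith
    obtain ⟨y, hy1, hy2⟩ := approx φ m hm0
    have hy2' := hy2 β hβ
    have hd : rdot (c y) β ≤ p (c y) := by
      rw [hrd_latt, hcp]
      exact_mod_cast (hmem β).1 hβ y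
    have habs1 := abs_le.1 hy1
    have habs2 := abs_le.1 hy2'
    have hmain : (m:ℝ) * rdot φ β ≤ (m:ℝ) * p φ + K := by
      rw [hK]; linarith
    nlinarith [hmain, hKme, hm0']
  -- conclusion
  ext φ
  simp only [Set.mem_setOf_eq]
  constructor
  · intro hφ i
    have hβ := hα_mem i
    have h1 := hdom _ hβ φ
    have h2 := hdom _ hβ (-φ)
    have hneg : rdot (-φ) (α i) = -(rdot φ (α i)) := by
      simp only [hrdot, ← Finset.sum_neg_distrib]
      apply Finset.sum_congr rfl
      intro j _
      simp
    rw [hneg, pneg] at h2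
    show |rdot φ (α i)| ≤ 1
    rw [abs_le]
    constructor <;> linarith
  · intro hφ
    have hβ1 : ∀ β ∈ Sfin, rdot φ β ≤ 1 := by
      intro β hβ
      obtain ⟨i, rfl⟩ := hα_surj β hβ
      exact le_trans (le_abs_self _) (hφ i)
    apply le_of_forall_pos_le_add
    intro ε hε
    obtain ⟨m, hm⟩ := exists_nat_gt (K / ε)
    have hm0 : 0 < m := by
      rcases Nat.eq_zero_or_pos m with rfl | h
      · exfalso
        have h0 : (0:ℝ) ≤ K / ε := div_nonneg hK0 hε.le
        simp at hm
        linarith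
      · exact h
    have hm0' : (0:ℝ) < (m:ℝ) := by exact_mod_cast hm0
    have hKme : K < (m:ℝ) * ε := by
      have := (div_lt_iff₀ hε).1 hm
      linarith
    obtain ⟨y, hy1, hy2⟩ := approx φ m hm0
    obtain ⟨β₀, hβ₀dom, hβ₀eq⟩ := hdual y
    have hβ₀mem : β₀ ∈ Sfin := (hmem β₀).2 hβ₀dom
    have hy2' := hy2 β₀ hβ₀mem
    have heq : p (c y) = rdot (c y) β₀ := by
      rw [hcp, hrd_latt, hβ₀eq]
    have h1 : rdot φ β₀ ≤ 1 := hβ1 β₀ hβ₀mem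
    have habs1 := abs_le.1 hy1
    have habs2 := abs_le.1 hy2'
    have hmain : (m:ℝ) * p φ ≤ (m:ℝ) * 1 + K := by
      rw [hK]
      nlinarith [habs1.2, habs2.1, heq, h1, hm0']
    nlinarith [hmain, hKme, hm0']
end

section
/- Let n be a positive integer and let p be a seminorm on ℝⁿ such that p(x) is an integer for every x ∈ ℤⁿ. Let B = {φ ∈ ℝⁿ : p(φ) ≤ 1} and let B* = {α ∈ ℝⁿ : ⟨φ, α⟩ ≤ 1 for all φ ∈ B} be its polar set, where ⟨·,·⟩ denotes the standard inner product on ℝⁿ. Then there exists a finite subset F ⊆ ℤⁿ such that B* equals the convex hull of F; in particular B* is a convex polytope with vertices at lattice points. -/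
namespace ThurstonAux


variable {n : ℕ}

noncomputable section

def L (x : Fin n → ℤ) : Fin n → ℝ := fun i => (x i : ℝ)

lemma L_add (x y : Fin n → ℤ) : L (x + y) = L x + L y := by
  funext i; simp [L]

lemma L_nsmul (m : ℕ) (x : Fin n → ℤ) : L (m • x) = (m : ℝ) • L x := by
  funext i; simp [L]

lemma L_single (i : Fin n) : L (Pi.single i (1:ℤ)) = Pi.single i (1:ℝ) := by
  funext j
  simp [L, Pi.single_apply]

variable {p : (Fin n → ℝ) → ℝ}
  (hp1 : ∀ (a : ℝ) (x : Fin n → ℝ), p (a • x) = |a| * p x)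
  (hp2 : ∀ x y : Fin n → ℝ, p (x + y) ≤ p x + p y)
  (hint : ∀ x : Fin n → ℤ, ∃ m : ℤ, p (fun i => (x i : ℝ)) = (m : ℝ))

include hp1 in
lemma p_zero : p 0 = 0 := by
  have := hp1 0 0
  simpa using this

include hp1 in
lemma p_neg (x : Fin n → ℝ) : p (-x) = p x := by
  have := hp1 (-1) x
  simpa using this

include hp1 hp2 in
lemma p_nonneg (x : Fin n → ℝ) : 0 ≤ p x := by
  have h := hp2 x (-x)
  rw [add_neg_cancel, p_zero hp1, p_neg hp1] at h
  linarith

include hp1 hp2 in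
lemma p_sum_le {ι : Type*} (s : Finset ι) (f : ι → Fin n → ℝ) :
    p (∑ i ∈ s, f i) ≤ ∑ i ∈ s, p (f i) := by
  classical
  induction s using Finset.induction with
  | empty => simp [p_zero hp1]
  | insert _ _ h ih =>
    rw [Finset.sum_insert h, Finset.sum_insert h]
    exact le_trans (hp2 _ _) (by linarith)

lemma single_eq_smul (i : Fin n) (a : ℝ) : Pi.single i a = a • (Pi.single i (1:ℝ) : Fin n → ℝ) := by
  funext j
  simp only [Pi.single_apply, Pi.smul_apply, smul_eq_mul]
  split <;> simp

include hp1 hp2 in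
lemma p_le_sum_abs (x : Fin n → ℝ) :
    p x ≤ ∑ i, |x i| * p (Pi.single i (1:ℝ)) := by
  have hx : x = ∑ i, Pi.single i (x i) := (Finset.univ_sum_single x).symm
  calc p x = p (∑ i, Pi.single i (x i)) := by rw [← hx]
    _ ≤ ∑ i, p (Pi.single i (x i)) := p_sum_le hp1 hp2 _ _
    _ = ∑ i, |x i| * p (Pi.single i (1:ℝ)) := by
        refine Finset.sum_congr rfl fun i _ => ?_
        rw [single_eq_smul, hp1]





def IsSub (g : (Fin n → ℤ) → ℤ) : Prop := ∀ x y, g (x + y) ≤ g x + g y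
def IsHom (g : (Fin n → ℤ) → ℤ) : Prop := ∀ (m : ℕ) (x : Fin n → ℤ), g (m • x) = m * g x
def Add1 (g : (Fin n → ℤ) → ℤ) (u : Fin n → ℤ) : Prop := ∀ y, g (y + u) = g y + g u

lemma step (g : (Fin n → ℤ) → ℤ) (hsub : IsSub g) (hhom : IsHom g) (ψ : Fin n → ℤ) :
    ∃ g' : (Fin n → ℤ) → ℤ, IsSub g' ∧ IsHom g' ∧ (∀ y, g' y ≤ g y) ∧
      Add1 g' ψ ∧ g' ψ = g ψ ∧
      ∀ u, Add1 g u → Add1 g' u ∧ g' u = g u := by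
  classical
  set G : (Fin n → ℤ) → ℕ → ℤ := fun y k => g (k • ψ + y) - k * g ψ with hGdef
  have hG0 : ∀ y, G y 0 = g y := by
    intro y
    simp only [hGdef, zero_smul, zero_add, Nat.cast_zero, zero_mul, sub_zero]
  have hGanti : ∀ y, Antitone (G y) := by
    intro y
    apply antitone_nat_of_succ_le
    intro k
    have h1 : ((k+1) • ψ + y) = (k • ψ + y) + ψ := by
      rw [succ_nsmul]; abel
    have h2 : g ((k • ψ + y) + ψ) ≤ g (k • ψ + y) + g ψ := hsub _ _
    simp only [hGdef, h1]
    push_cast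
    linarith
  have hGbdd : ∀ y k, -g (-y) ≤ G y k := by
    intro y k
    have h1 : (k • ψ : Fin n → ℤ) = (k • ψ + y) + (-y) := by abel
    have h2 : g ((k • ψ + y) + (-y)) ≤ g (k • ψ + y) + g (-y) := hsub _ _
    have h3 : g (k • ψ) = k * g ψ := hhom k ψ
    rw [h1] at h3
    simp only [hGdef]
    linarith
  have hex : ∀ y, ∃ m : ℤ, (∃ k, G y k = m) ∧ ∀ k, m ≤ G y k := by
    intro y
    obtain ⟨lb, hlb1, hlb2⟩ := Int.exists_least_of_bdd
      (P := fun z => ∃ k, G y k = z) ⟨-g (-y), fun z ⟨k, hk⟩ => hk ▸ hGbdd y k⟩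
      ⟨G y 0, 0, rfl⟩
    exact ⟨lb, hlb1, fun k => hlb2 _ ⟨k, rfl⟩⟩
  choose g' hmem hle using hex
  have hzero : ∀ k, G 0 k = 0 := by
    intro k
    have h3 : g (k • ψ) = k * g ψ := hhom k ψ
    simp only [hGdef, add_zero, h3, sub_self]
  have hg'zero : g' 0 = 0 := by
    obtain ⟨k, hk⟩ := hmem 0
    rw [← hk, hzero]
  have hg'le : ∀ y, g' y ≤ g y := fun y => (hG0 y) ▸ hle y 0
  refine ⟨g', ?_, ?_, hg'le, ?_, ?_, ?_⟩
  · -- IsSub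
    intro x y
    obtain ⟨k1, hk1⟩ := hmem x
    obtain ⟨k2, hk2⟩ := hmem y
    set k := max k1 k2 with hk
    have key : G (x + y) (k + k) ≤ G x k + G y k := by
      have h1 : ((k+k) • ψ + (x + y)) = (k • ψ + x) + (k • ψ + y) := by
        rw [add_nsmul]; abel
      have h2 := hsub (k • ψ + x) (k • ψ + y)
      rw [← h1] at h2
      simp only [hGdef]
      push_cast
      linarith
    calc g' (x + y) ≤ G (x + y) (k + k) := hle _ _
      _ ≤ G x k + G y k := key
      _ ≤ G x k1 + G y k2 := by
          gcongr
          · exact hGanti x (le_max_left _ _)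
          · exact hGanti y (le_max_right _ _)
      _ = g' x + g' y := by rw [hk1, hk2]
  · -- IsHom
    intro m y
    rcases Nat.eq_zero_or_pos m with hm | hm
    · subst hm; simp [hg'zero]
    have hsmul : ∀ (j : ℕ), G (m • y) (m * j) = m * G y j := by
      intro j
      have h1 : ((m*j) • ψ + m • y) = m • (j • ψ + y) := by
        rw [smul_add, mul_smul]
      have h2 : g (m • (j • ψ + y)) = m * g (j • ψ + y) := hhom m _
      rw [← h1] at h2
      simp only [hGdef, h2]
      push_cast
      ring
    apply le_antisymm
    · obtain ⟨k0, hk0⟩ := hmem y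
      calc g' (m • y) ≤ G (m • y) (m * k0) := hle _ _
        _ = m * G y k0 := hsmul k0
        _ = m * g' y := by rw [hk0]
    · obtain ⟨j, hj⟩ := hmem (m • y)
      have h1 : G (m • y) (m * j) ≤ G (m • y) j :=
        hGanti _ (Nat.le_mul_of_pos_left j hm)
      have h2 : (m : ℤ) * g' y ≤ m * G y j :=
        mul_le_mul_of_nonneg_left (hle y j) (by positivity)
      rw [← hj]
      calc (m:ℤ) * g' y ≤ m * G y j := h2
        _ = G (m • y) (m * j) := (hsmul j).symm
        _ ≤ G (m • y) j := h1
  · -- Add1 g' ψ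
    have hgψ : g' ψ = g ψ := by
      obtain ⟨k, hk⟩ := hmem ψ
      have : G ψ k = g ψ := by
        have h1 : (k • ψ + ψ) = ((k+1) • ψ : Fin n → ℤ) := by rw [succ_nsmul]
        have h2 : g ((k+1) • ψ) = (k+1) * g ψ := hhom (k+1) ψ
        simp only [hGdef, h1, h2]
        push_cast; ring
      rw [← hk, this]
    intro y
    rw [hgψ]
    have hshift : ∀ k, G (y + ψ) k = G y (k+1) + g ψ := by
      intro k
      have h1 : (k • ψ + (y + ψ)) = ((k+1) • ψ + y) := by rw [succ_nsmul]; abel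
      simp only [hGdef, h1]
      push_cast; ring
    apply le_antisymm
    · obtain ⟨k0, hk0⟩ := hmem y
      calc g' (y + ψ) ≤ G (y + ψ) k0 := hle _ _
        _ = G y (k0+1) + g ψ := hshift k0
        _ ≤ G y k0 + g ψ := by
            have := hGanti y (Nat.le_succ k0); linarith
        _ = g' y + g ψ := by rw [hk0]
    · obtain ⟨j, hj⟩ := hmem (y + ψ)
      rw [← hj, hshift j]
      have := hle y (j+1)
      linarith
  · -- g' ψ = g ψ  (recompute; same as above)
    obtain ⟨k, hk⟩ := hmem ψ
    have : G ψ k = g ψ := by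
      have h1 : (k • ψ + ψ) = ((k+1) • ψ : Fin n → ℤ) := by rw [succ_nsmul]
      have h2 : g ((k+1) • ψ) = (k+1) * g ψ := hhom (k+1) ψ
      simp only [hGdef, h1, h2]
      push_cast; ring
    rw [← hk, this]
  · -- preservation
    intro u hadd
    have hGu : ∀ y k, G (y + u) k = G y k + g u := by
      intro y k
      have h1 : (k • ψ + (y + u)) = ((k • ψ + y) + u) := by abel
      simp only [hGdef, h1, hadd (k • ψ + y)]
      ring
    have hval : ∀ y, g' (y + u) = g' y + g u := by
      intro y
      apply le_antisymm
      · obtain ⟨k0, hk0⟩ := hmem y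
        calc g' (y + u) ≤ G (y + u) k0 := hle _ _
          _ = G y k0 + g u := hGu y k0
          _ = g' y + g u := by rw [hk0]
      · obtain ⟨j, hj⟩ := hmem (y + u)
        rw [← hj, hGu y j]
        have := hle y j
        linarith
    have hu : g' u = g u := by
      have := hval 0
      rw [zero_add, hg'zero, zero_add] at this
      exact this
    exact ⟨fun y => by rw [hval y, hu], hu⟩









lemma many_steps (l : List (Fin n → ℤ)) :
    ∀ (g : (Fin n → ℤ) → ℤ), IsSub g → IsHom g →
    ∃ g', IsSub g' ∧ IsHom g' ∧ (∀ y, g' y ≤ g y) ∧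
      (∀ u ∈ l, Add1 g' u) ∧
      (∀ u, Add1 g u → Add1 g' u ∧ g' u = g u) := by
  induction l with
  | nil =>
    intro g hs hh
    exact ⟨g, hs, hh, fun y => le_rfl, by simp, fun u h => ⟨h, rfl⟩⟩
  | cons ψ l ih =>
    intro g hs hh
    obtain ⟨g1, hs1, hh1, hle1, hadd1, hψval, hpres1⟩ := step g hs hh ψ
    obtain ⟨g2, hs2, hh2, hle2, hl2, hpres2⟩ := ih g1 hs1 hh1
    refine ⟨g2, hs2, hh2, fun y => (hle2 y).trans (hle1 y), ?_, ?_⟩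
    · intro u hu
      rcases List.mem_cons.mp hu with h | h
      · subst h; exact (hpres2 _ hadd1).1
      · exact hl2 u h
    · intro u hu
      obtain ⟨h1, h2⟩ := hpres1 u hu
      obtain ⟨h3, h4⟩ := hpres2 u h1
      exact ⟨h3, h4.trans h2⟩

lemma Add1.nsmul {g : (Fin n → ℤ) → ℤ} {u} (h : Add1 g u) :
    ∀ (m : ℕ) (y), g (y + m • u) = g y + m * g u := by
  intro m
  induction m with
  | zero => simp
  | succ m ih =>
    intro y
    have h1 : (y + (m+1) • u) = (y + m • u) + u := by rw [succ_nsmul]; abel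
    rw [h1, h (y + m • u), ih y]
    push_cast; ring

lemma Add1.zsmul {g : (Fin n → ℤ) → ℤ} {u} (h : Add1 g u) :
    ∀ (m : ℤ) (y), g (y + m • u) = g y + m * g u := by
  intro m y
  obtain ⟨m', rfl | rfl⟩ := Int.eq_nat_or_neg m
  · rw [natCast_zsmul]; exact_mod_cast h.nsmul m' y
  · set z := y + (-(m' : ℤ)) • u with hz
    have h2 : z + m' • u = y := by
      rw [hz, ← natCast_zsmul u m', neg_smul]
      abel
    have h1 := h.nsmul m' z
    rw [h2] at h1
    show g z = g y + (-(m' : ℤ)) * g u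
    push_cast at h1 ⊢
    linarith










include hp1 hp2 hint in
lemma exists_dual_vector (φ : Fin n → ℤ) :
    ∃ v : Fin n → ℤ,
      (∀ x : Fin n → ℤ, ((∑ j, x j * v j : ℤ) : ℝ) ≤ p (L x)) ∧
      (((∑ j, φ j * v j : ℤ) : ℝ) = p (L φ)) := by
  classical
  set g0 : (Fin n → ℤ) → ℤ := fun x => Classical.choose (hint x) with hg0def
  have hg0 : ∀ x, p (L x) = (g0 x : ℝ) := fun x => Classical.choose_spec (hint x)
  have hs0 : IsSub g0 := by
    intro x y
    have h : (g0 (x+y) : ℝ) ≤ (g0 x : ℝ) + (g0 y : ℝ) := by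
      rw [← hg0, ← hg0, ← hg0, L_add]; exact hp2 _ _
    exact_mod_cast h
  have hh0 : IsHom g0 := by
    intro m x
    have h : (g0 (m • x) : ℝ) = (m : ℝ) * (g0 x : ℝ) := by
      rw [← hg0, ← hg0, L_nsmul, hp1]
      rw [abs_of_nonneg (by positivity : (0:ℝ) ≤ (m:ℝ))]
    exact_mod_cast h
  obtain ⟨g1, hs1, hh1, hle1, haddφ, hφval, _⟩ := step g0 hs0 hh0 φ
  obtain ⟨g2, hs2, hh2, hle2, hl2, hpres2⟩ :=
    many_steps (List.ofFn fun i => (Pi.single i 1 : Fin n → ℤ)) g1 hs1 hh1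
  obtain ⟨haddφ2, hφval2⟩ := hpres2 φ haddφ
  set v : Fin n → ℤ := fun i => g2 (Pi.single i 1) with hvdef
  have hg2zero : g2 0 = 0 := by
    have := hh2 0 0; simpa using this
  have hsingle : ∀ i, Add1 g2 (Pi.single i 1) := by
    intro i
    exact hl2 _ (by rw [List.mem_ofFn]; exact ⟨i, rfl⟩)
  have hlin : ∀ x : Fin n → ℤ, g2 x = ∑ j, x j * v j := by
    intro x
    have key : ∀ s : Finset (Fin n),
        g2 (∑ j ∈ s, Pi.single j (x j)) = ∑ j ∈ s, x j * v j := by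
      intro s
      induction s using Finset.induction with
      | empty => simpa using hg2zero
      | @insert a s ha ih =>
        rw [Finset.sum_insert ha, Finset.sum_insert ha, add_comm]
        have hsm : (Pi.single a (x a) : Fin n → ℤ) = (x a) • (Pi.single a 1 : Fin n → ℤ) := by
          funext j
          simp only [Pi.single_apply, Pi.smul_apply, smul_eq_mul]
          split <;> simp
        rw [hsm, (hsingle a).zsmul (x a) _, ih]
        show _ = x a * v a + _
        rw [hvdef]
        ring
    calc g2 x = g2 (∑ j, Pi.single j (x j)) := by rw [Finset.univ_sum_single]
      _ = ∑ j, x j * v j := key Finset.univ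
  refine ⟨v, ?_, ?_⟩
  · intro x
    rw [← hlin, hg0]
    exact_mod_cast (hle2 x).trans (hle1 x)
  · rw [← hlin, hφval2, hφval, hg0 φ]






lemma arch {A B K : ℝ} (h : ∀ t : ℕ, 1 ≤ t → (t:ℝ) * A ≤ (t:ℝ) * B + K) : A ≤ B := by
  by_contra hc
  push_neg at hc
  obtain ⟨t, ht⟩ := exists_nat_gt (max 1 (K / (A - B)))
  have h1 : (1:ℝ) < t := lt_of_le_of_lt (le_max_left _ _) ht
  have ht1 : 1 ≤ t := by exact_mod_cast h1.le
  have h2 : K / (A - B) < t := lt_of_le_of_lt (le_max_right _ _) ht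
  have h3 : K < t * (A - B) := by
    rwa [div_lt_iff₀ (by linarith)] at h2
  have h4 := h t ht1
  nlinarith

include hp1 hp2 in
lemma dual_real (v : Fin n → ℤ)
    (hv : ∀ x : Fin n → ℤ, ((∑ j, x j * v j : ℤ) : ℝ) ≤ p (L x)) :
    ∀ x : Fin n → ℝ, (∑ j, x j * (v j : ℝ)) ≤ p x := by
  intro x
  set C : ℝ := ∑ i, p (Pi.single i (1:ℝ)) with hC
  set V : ℝ := ∑ j, |(v j : ℝ)| with hV
  apply arch (K := C + V)
  intro t ht
  set y : Fin n → ℤ := fun i => ⌊(t:ℝ) * x i⌋ with hy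
  have hfl : ∀ i, |(y i : ℝ) - (t:ℝ) * x i| ≤ 1 := by
    intro i
    rw [abs_le]
    constructor
    · have := Int.lt_floor_add_one ((t:ℝ) * x i); simp only [hy]; linarith
    · have := Int.floor_le ((t:ℝ) * x i); simp only [hy]; linarith
  have step1 : (t:ℝ) * ∑ j, x j * (v j : ℝ) ≤ (∑ j, (y j:ℝ) * (v j : ℝ)) + V := by
    rw [Finset.mul_sum, hV, ← Finset.sum_add_distrib]
    apply Finset.sum_le_sum
    intro j _
    have h1 := hfl j
    rw [abs_le] at h1
    have h2 := le_abs_self ((v j : ℝ))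
    have h3 := neg_abs_le ((v j : ℝ))
    nlinarith [abs_nonneg ((v j : ℝ))]
  have step2 : (∑ j, (y j:ℝ) * (v j : ℝ)) ≤ p (L y) := by
    have := hv y
    push_cast at this
    exact this
  have step3 : p (L y) ≤ (t:ℝ) * p x + C := by
    have hsplit : L y = (t:ℝ) • x + (L y - (t:ℝ) • x) := by abel
    have h1 : p (L y) ≤ p ((t:ℝ) • x) + p (L y - (t:ℝ) • x) := by
      conv_lhs => rw [hsplit]
      exact hp2 _ _
    have h2 : p ((t:ℝ) • x) = (t:ℝ) * p x := by
      rw [hp1, abs_of_nonneg (by positivity)]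
    have h3 : p (L y - (t:ℝ) • x) ≤ C := by
      refine le_trans (p_le_sum_abs hp1 hp2 _) ?_
      rw [hC]
      apply Finset.sum_le_sum
      intro i _
      have hcomp : (L y - (t:ℝ) • x) i = (y i : ℝ) - (t:ℝ) * x i := by
        simp [L]
      rw [hcomp]
      have := hfl i
      have hpn := p_nonneg hp1 hp2 (Pi.single i (1:ℝ))
      nlinarith
    linarith
  linarith


end
end ThurstonAux


open ThurstonAux in
/-- The polar set of the unit ball of a seminorm on `ℝⁿ` that is integer-valued on
the lattice `ℤⁿ` is the convex hull of a finite set of lattice points. -/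
theorem dual_ball_convexHull_of_lattice_points (n : ℕ) (hn : 0 < n)
    (p : (Fin n → ℝ) → ℝ)
    (hp1 : ∀ (a : ℝ) (x : Fin n → ℝ), p (a • x) = |a| * p x)
    (hp2 : ∀ x y : Fin n → ℝ, p (x + y) ≤ p x + p y)
    (hint : ∀ x : Fin n → ℤ, ∃ m : ℤ, p (fun i => (x i : ℝ)) = (m : ℝ)) :
    ∃ F : Finset (Fin n → ℤ),
      {α : Fin n → ℝ | ∀ φ : Fin n → ℝ, p φ ≤ 1 → ∑ j, φ j * α j ≤ 1} =
        convexHull ℝ ((fun (x : Fin n → ℤ) => fun i => (x i : ℝ)) '' ↑F) := by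
  classical
  set Sset : Set (Fin n → ℤ) := {v | ∀ x : Fin n → ℝ, (∑ j, x j * (v j : ℝ)) ≤ p x}
    with hSdef
  have hsingle_sum : ∀ (i : Fin n) (w : Fin n → ℝ),
      ∑ j, (Pi.single i (1:ℝ) : Fin n → ℝ) j * w j = w i := by
    intro i w
    rw [Finset.sum_eq_single i]
    · simp
    · intro j _ hj
      simp [Pi.single_apply, hj]
    · simp
  have hfin : Sset.Finite := by
    apply Set.Finite.subset
      (Set.Finite.pi (fun i : Fin n =>
        Set.finite_Icc (-(⌈p (-(Pi.single i (1:ℝ)))⌉)) ⌈p (Pi.single i (1:ℝ))⌉))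
    intro v hv
    simp only [Set.mem_pi, Set.mem_univ, Set.mem_Icc, forall_true_left]
    intro i
    have h1 := hv (Pi.single i (1:ℝ))
    have h2 := hv (-(Pi.single i (1:ℝ)))
    rw [hsingle_sum] at h1
    have h2' : -((v i : ℝ)) ≤ p (-(Pi.single i (1:ℝ))) := by
      refine le_trans (le_of_eq ?_) h2
      rw [← hsingle_sum i (fun j => (v j : ℝ))]
      rw [← Finset.sum_neg_distrib]
      exact Finset.sum_congr rfl fun j _ => by simp
    constructor
    · have : -((⌈p (-(Pi.single i (1:ℝ)))⌉ : ℝ)) ≤ (v i : ℝ) := by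
        have := Int.le_ceil (p (-(Pi.single i (1:ℝ))))
        linarith
      exact_mod_cast this
    · have : (v i : ℝ) ≤ (⌈p (Pi.single i (1:ℝ))⌉ : ℝ) :=
        le_trans h1 (Int.le_ceil _)
      exact_mod_cast this
  refine ⟨hfin.toFinset, ?_⟩
  set K : Set (Fin n → ℝ) :=
    (fun (x : Fin n → ℤ) => fun i => (x i : ℝ)) '' ↑hfin.toFinset with hKdef
  have hKfin : K.Finite := (hfin.toFinset.finite_toSet).image _
  set C : ℝ := ∑ i, p (Pi.single i (1:ℝ)) with hC
  set V₀ : ℝ := ∑ i, (p (Pi.single i (1:ℝ)) + p (-(Pi.single i (1:ℝ)))) with hV₀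
  have hVv : ∀ v ∈ Sset, (∑ j, |(v j : ℝ)|) ≤ V₀ := by
    intro v hv
    rw [hV₀]
    apply Finset.sum_le_sum
    intro i _
    have h1 := hv (Pi.single i (1:ℝ))
    have h2 := hv (-(Pi.single i (1:ℝ)))
    rw [hsingle_sum] at h1
    have h2' : -((v i : ℝ)) ≤ p (-(Pi.single i (1:ℝ))) := by
      refine le_trans (le_of_eq ?_) h2
      rw [← hsingle_sum i (fun j => (v j : ℝ))]
      rw [← Finset.sum_neg_distrib]
      exact Finset.sum_congr rfl fun j _ => by simp
    have hb := p_nonneg hp1 hp2 (Pi.single i (1:ℝ))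
    have hc := p_nonneg hp1 hp2 (-(Pi.single i (1:ℝ)))
    rw [abs_le]
    constructor <;> linarith
  ext α
  simp only [Set.mem_setOf_eq]
  constructor
  · -- forward inclusion
    intro hα
    by_contra hnot
    have hα' : ∀ x : Fin n → ℝ, (∑ j, x j * α j) ≤ p x := by
      intro x
      rcases eq_or_lt_of_le (p_nonneg hp1 hp2 x) with h0 | hpos
      · by_contra hgt
        push_neg at hgt
        rw [← h0] at hgt
        set c := ∑ j, x j * α j with hc
        have hple : p ((2 / c) • x) ≤ 1 := by
          rw [hp1, ← h0, mul_zero]; norm_num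
        have h1 := hα _ hple
        have h2 : ∑ j, ((2/c) • x) j * α j = (2/c) * c := by
          rw [hc, Finset.mul_sum]
          exact Finset.sum_congr rfl fun j _ => by
            simp only [Pi.smul_apply, smul_eq_mul]; ring
        rw [h2, div_mul_cancel₀ _ hgt.ne'] at h1
        linarith
      · have hple : p ((p x)⁻¹ • x) ≤ 1 := by
          rw [hp1, abs_of_nonneg (by positivity), inv_mul_cancel₀ (ne_of_gt hpos)]
        have h1 := hα _ hple
        have h2 : ∑ j, ((p x)⁻¹ • x) j * α j = (p x)⁻¹ * ∑ j, x j * α j := by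
          rw [Finset.mul_sum]
          exact Finset.sum_congr rfl fun j _ => by
            simp [Pi.smul_apply, smul_eq_mul]; ring
        rw [h2] at h1
        have h3 := mul_le_mul_of_nonneg_left h1 hpos.le
        rwa [mul_one, ← mul_assoc, mul_inv_cancel₀ hpos.ne', one_mul] at h3
    have hclosed : IsClosed (convexHull ℝ K) := hKfin.isClosed_convexHull (𝕜 := ℝ)
    obtain ⟨f, u, hfu, huα⟩ :=
      geometric_hahn_banach_closed_point (convex_convexHull ℝ K) hclosed hnot
    set φ : Fin n → ℝ := fun j => f (Pi.single j (1:ℝ)) with hφdef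
    have hfrep : ∀ w : Fin n → ℝ, f w = ∑ j, w j * φ j := by
      intro w
      conv_lhs => rw [← Finset.univ_sum_single w]
      rw [map_sum]
      refine Finset.sum_congr rfl fun j _ => ?_
      have hsm : (Pi.single j (w j) : Fin n → ℝ) = w j • (Pi.single j (1:ℝ) : Fin n → ℝ) := by
        funext i
        simp only [Pi.single_apply, Pi.smul_apply, smul_eq_mul]
        split <;> simp
      rw [hsm, map_smul]
      rfl
    have hfα : f α ≤ u := by
      apply arch (K := V₀ + C)
      intro t ht
      set ψ : Fin n → ℤ := fun j => ⌊(t:ℝ) * φ j⌋ with hψdef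
      have hflo : ∀ j, |(ψ j : ℝ) - (t:ℝ) * φ j| ≤ 1 := by
        intro j
        rw [abs_le]
        constructor
        · have := Int.lt_floor_add_one ((t:ℝ) * φ j); simp only [hψdef]; linarith
        · have := Int.floor_le ((t:ℝ) * φ j); simp only [hψdef]; linarith
      obtain ⟨v, hv1, hv2⟩ := exists_dual_vector hp1 hp2 hint ψ
      have hvS : v ∈ Sset := dual_real hp1 hp2 v hv1
      have hLv : (fun i => ((v i : ℝ))) ∈ convexHull ℝ K := by
        apply subset_convexHull
        exact ⟨v, by rw [Set.Finite.coe_toFinset]; exact hvS, rfl⟩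
      have hfv : f (fun i => ((v i : ℝ))) < u := hfu _ hLv
      have e1 : f α ≤ p φ := by
        rw [hfrep α]
        refine le_trans (le_of_eq ?_) (hα' φ)
        exact Finset.sum_congr rfl fun j _ => mul_comm _ _
      have e3 : (t:ℝ) * f α ≤ (t:ℝ) * p φ :=
        mul_le_mul_of_nonneg_left e1 (by positivity)
      have e4 : (t:ℝ) * p φ ≤ p (L ψ) + C := by
        have h2 : p ((t:ℝ) • φ) = (t:ℝ) * p φ := by
          rw [hp1, abs_of_nonneg (by positivity)]
        have hsplit : (t:ℝ) • φ = L ψ + ((t:ℝ) • φ - L ψ) := by abel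
        have h1 : p ((t:ℝ) • φ) ≤ p (L ψ) + p ((t:ℝ) • φ - L ψ) := by
          conv_lhs => rw [hsplit]
          exact hp2 _ _
        have h3 : p ((t:ℝ) • φ - L ψ) ≤ C := by
          refine le_trans (p_le_sum_abs hp1 hp2 _) ?_
          rw [hC]
          apply Finset.sum_le_sum
          intro i _
          have hcomp : ((t:ℝ) • φ - L ψ) i = (t:ℝ) * φ i - (ψ i : ℝ) := by
            simp [L]
          rw [hcomp]
          have h4 := hflo i
          have hpn := p_nonneg hp1 hp2 (Pi.single i (1:ℝ))
          rw [abs_sub_comm] at h4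
          nlinarith
        linarith
      have e5 : p (L ψ) ≤ (t:ℝ) * f (fun i => ((v i : ℝ))) + V₀ := by
        rw [← hv2]
        have hfLv : f (fun i => ((v i : ℝ))) = ∑ j, (v j : ℝ) * φ j := hfrep _
        rw [hfLv, Finset.mul_sum]
        push_cast
        have hVv' := hVv v hvS
        have key : ∑ j, (ψ j : ℝ) * (v j : ℝ) ≤
            (∑ j, (t:ℝ) * ((v j : ℝ) * φ j)) + ∑ j, |(v j : ℝ)| := by
          rw [← Finset.sum_add_distrib]
          apply Finset.sum_le_sum
          intro j _
          have h4 := hflo j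
          rw [abs_le] at h4
          have h5 := le_abs_self ((v j : ℝ))
          have h6 := neg_abs_le ((v j : ℝ))
          nlinarith [abs_nonneg ((v j : ℝ))]
        linarith
      have e6 : (t:ℝ) * f (fun i => ((v i : ℝ))) ≤ (t:ℝ) * u :=
        mul_le_mul_of_nonneg_left hfv.le (by positivity)
      linarith
    linarith
  · -- reverse inclusion
    intro hmem
    have hsub : K ⊆ {α : Fin n → ℝ | ∀ φ : Fin n → ℝ, p φ ≤ 1 → ∑ j, φ j * α j ≤ 1} := by
      rintro _ ⟨v, hvF, rfl⟩
      have hvS : v ∈ Sset := by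
        rwa [← Set.Finite.coe_toFinset hfin]
      intro φ hφ
      exact le_trans (hvS φ) hφ
    have hconv : Convex ℝ {α : Fin n → ℝ | ∀ φ : Fin n → ℝ, p φ ≤ 1 → ∑ j, φ j * α j ≤ 1} := by
      intro β hβ γ hγ a b ha hb hab
      intro φ hφ
      have hsum : ∑ j, φ j * (a • β + b • γ) j =
          a * (∑ j, φ j * β j) + b * (∑ j, φ j * γ j) := by
        rw [Finset.mul_sum, Finset.mul_sum, ← Finset.sum_add_distrib]
        refine Finset.sum_congr rfl fun j _ => ?_
        simp only [Pi.add_apply, Pi.smul_apply, smul_eq_mul]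
        ring
      rw [hsum]
      nlinarith [hβ φ hφ, hγ φ hφ]
    exact convexHull_min hsub hconv hmem
end

section
/- Let n be a positive integer and let p be a norm on ℝⁿ (i.e., a seminorm with p(φ) = 0 only for φ = 0) such that p(x) is an integer for every x ∈ ℤⁿ. Then the closed unit ball {φ ∈ ℝⁿ : p(φ) ≤ 1} is the convex hull of a finite set of points all of whose coordinates are rational. -/
open Filter Matrix Finset

namespace Thurston

variable {n : ℕ} {p : (Fin n → ℝ) → ℝ}

section Basic
variable (hp1 : ∀ (a : ℝ) (x : Fin n → ℝ), p (a • x) = |a| * p x)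
    (hp2 : ∀ x y : Fin n → ℝ, p (x + y) ≤ p x + p y)

include hp1 in
lemma p_zero : p 0 = 0 := by
  have := hp1 0 0; simpa using this

include hp1 in
lemma p_neg (x : Fin n → ℝ) : p (-x) = p x := by
  have := hp1 (-1) x; simpa using this

include hp1 hp2 in
lemma p_nonneg (x : Fin n → ℝ) : 0 ≤ p x := by
  have h := hp2 x (-x)
  rw [add_neg_cancel, p_zero hp1, p_neg hp1] at h
  linarith

include hp1 hp2 in
lemma p_sum_le {ι : Type*} (s : Finset ι) (f : ι → Fin n → ℝ) :
    p (∑ i ∈ s, f i) ≤ ∑ i ∈ s, p (f i) := by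
  classical
  induction s using Finset.induction with
  | empty => simp [p_zero hp1]
  | @insert _ _ h ih =>
    rw [Finset.sum_insert h, Finset.sum_insert h]
    exact (hp2 _ _).trans (by linarith)

include hp1 hp2 in
lemma p_le_const : ∃ C : ℝ, 0 < C ∧ ∀ x, p x ≤ C * ‖x‖ := by
  classical
  refine ⟨(∑ i, p (Pi.single i 1)) + 1,
    add_pos_of_nonneg_of_pos (Finset.sum_nonneg fun i _ => p_nonneg hp1 hp2 _) one_pos,
    fun x => ?_⟩
  have hx : x = ∑ i, x i • (Pi.single i (1:ℝ) : Fin n → ℝ) := by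
    conv_lhs => rw [← Finset.univ_sum_single x]
    refine Finset.sum_congr rfl fun i _ => ?_
    ext j
    by_cases h : j = i <;> simp [Pi.single_apply, h]
  calc p x = p (∑ i, x i • (Pi.single i (1:ℝ) : Fin n → ℝ)) := by rw [← hx]
    _ ≤ ∑ i, p (x i • (Pi.single i (1:ℝ) : Fin n → ℝ)) := p_sum_le hp1 hp2 _ _
    _ = ∑ i, |x i| * p (Pi.single i (1:ℝ) : Fin n → ℝ) := by simp [hp1]
    _ ≤ ∑ i, ‖x‖ * p (Pi.single i (1:ℝ) : Fin n → ℝ) := by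
        refine Finset.sum_le_sum fun i _ => ?_
        exact mul_le_mul_of_nonneg_right
          ((Real.norm_eq_abs _ ▸ norm_le_pi_norm x i)) (p_nonneg hp1 hp2 _)
    _ = (∑ i, p (Pi.single i (1:ℝ) : Fin n → ℝ)) * ‖x‖ := by rw [← Finset.mul_sum, mul_comm]
    _ ≤ _ := by nlinarith [norm_nonneg x]

include hp1 hp2 in
lemma p_continuous : Continuous p := by
  obtain ⟨C, hC, hCle⟩ := p_le_const hp1 hp2
  have hlip : LipschitzWith (Real.toNNReal C) p := by
    refine LipschitzWith.of_dist_le_mul fun x y => ?_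
    have h1 : p x - p y ≤ C * ‖x - y‖ := by
      have := hp2 (x - y) y
      rw [sub_add_cancel] at this
      linarith [hCle (x - y)]
    have h2 : p y - p x ≤ C * ‖x - y‖ := by
      have := hp2 (y - x) x
      rw [sub_add_cancel] at this
      have h3 := hCle (y - x)
      have h4 : p (y - x) = p (x - y) := by rw [← neg_sub x y, p_neg hp1]
      have h5 : ‖y - x‖ = ‖x - y‖ := norm_sub_rev _ _
      rw [h4, h5] at h3
      linarith
    rw [Real.dist_eq, dist_eq_norm, Real.coe_toNNReal _ hC.le]
    rw [abs_le]; constructor <;> linarith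
  exact hlip.continuous

include hp1 hp2 in
lemma p_ge_const (hn : 0 < n) (hdef : ∀ φ : Fin n → ℝ, p φ = 0 → φ = 0) :
    ∃ c : ℝ, 0 < c ∧ ∀ x, c * ‖x‖ ≤ p x := by
  haveI : Nonempty (Fin n) := Fin.pos_iff_nonempty.mp hn
  have hsph : IsCompact (Metric.sphere (0 : Fin n → ℝ) 1) := isCompact_sphere _ _
  have hne : (Metric.sphere (0 : Fin n → ℝ) 1).Nonempty :=
    NormedSpace.sphere_nonempty.mpr zero_le_one
  obtain ⟨x₀, hx₀mem, hx₀min⟩ := hsph.exists_isMinOn hne ((p_continuous hp1 hp2).continuousOn)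
  have hx₀norm : ‖x₀‖ = 1 := by simpa using hx₀mem
  have hx₀ne : x₀ ≠ 0 := by intro h; rw [h] at hx₀norm; simp at hx₀norm
  have hc : 0 < p x₀ := by
    rcases lt_or_eq_of_le (p_nonneg hp1 hp2 x₀) with h | h
    · exact h
    · exact absurd (hdef x₀ h.symm) hx₀ne
  refine ⟨p x₀, hc, fun x => ?_⟩
  rcases eq_or_ne x 0 with rfl | hx
  · simp [p_zero hp1]
  · have hnx : 0 < ‖x‖ := norm_pos_iff.mpr hx
    have hu : ‖x‖⁻¹ • x ∈ Metric.sphere (0 : Fin n → ℝ) 1 := by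
      simp [norm_smul, abs_of_pos (inv_pos.mpr hnx), inv_mul_cancel₀ hnx.ne']
    have h1 : p x₀ ≤ p (‖x‖⁻¹ • x) := hx₀min hu
    have h2 : p (‖x‖⁻¹ • x) = ‖x‖⁻¹ * p x := by
      rw [hp1, abs_of_pos (inv_pos.mpr hnx)]
    rw [h2] at h1
    rw [mul_comm]
    exact (le_div_iff₀' hnx).mp (by rwa [div_eq_inv_mul])

include hp1 hp2 in
lemma ball_isCompact (hn : 0 < n) (hdef : ∀ φ : Fin n → ℝ, p φ = 0 → φ = 0) :
    IsCompact {φ : Fin n → ℝ | p φ ≤ 1} := by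
  obtain ⟨c, hc, hle⟩ := p_ge_const hp1 hp2 hn hdef
  refine Metric.isCompact_of_isClosed_isBounded
    (isClosed_le (p_continuous hp1 hp2) continuous_const) ?_
  rw [isBounded_iff_forall_norm_le]
  refine ⟨c⁻¹, fun x hx => ?_⟩
  rw [Set.mem_setOf_eq] at hx
  have h2 := hle x
  rw [inv_eq_one_div, le_div_iff₀ hc]
  linarith



/-- Integer-valued functions on the lattice that behave like restrictions of seminorms
(subadditive, positively homogeneous) but possibly asymmetric. -/
structure GoodFun (n : ℕ) where
  q : (Fin n → ℤ) → ℤ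
  subadd : ∀ z w, q (z + w) ≤ q z + q w
  nsmul : ∀ (m : ℕ) (z), q (m • z) = m * q z
  sym : ∀ z, 0 ≤ q z + q (-z)

lemma GoodFun.zero {n : ℕ} (Q : GoodFun n) : Q.q 0 = 0 := by
  have := Q.nsmul 0 0
  simpa using this

/-- An antitone integer sequence bounded below stabilizes. -/
lemma int_seq_stab (a : ℕ → ℤ) (hmono : ∀ k, a (k + 1) ≤ a k) (b : ℤ) (hb : ∀ k, b ≤ a k) :
    ∃ L N, (∀ k, N ≤ k → a k = L) ∧ ∀ k, L ≤ a k := by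
  have hanti : Antitone a := antitone_nat_of_succ_le hmono
  obtain ⟨lb, ⟨k0, hk0⟩, hleast⟩ :=
    Int.exists_least_of_bdd (P := fun m => ∃ k, a k = m) ⟨b, fun m ⟨k, hk⟩ => hk ▸ hb k⟩ ⟨a 0, 0, rfl⟩
  refine ⟨lb, k0, fun k hk => le_antisymm (hk0 ▸ hanti hk) (hleast _ ⟨k, rfl⟩), fun k => hleast _ ⟨k, rfl⟩⟩

/-- Thurston's stabilization: given a good function `Q` and a lattice direction `x`,
there is a good function `ℓ ≤ Q` that is linear along `x` with `ℓ x = Q x`, and which remains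
linear along all directions where `Q` was linear. -/
lemma GoodFun.stabilize {n : ℕ} (Q : GoodFun n) (x : Fin n → ℤ) :
    ∃ Q' : GoodFun n, (∀ z, Q'.q z ≤ Q.q z) ∧ Q'.q x = Q.q x ∧ Q'.q (-x) = -Q.q x ∧
      (∀ v, Q.q v + Q.q (-v) = 0 → Q'.q v + Q'.q (-v) = 0) := by
  classical
  set a : (Fin n → ℤ) → ℕ → ℤ := fun z k => Q.q (k • x + z) - k * Q.q x with ha
  have hstep : ∀ z k, a z (k + 1) ≤ a z k := by
    intro z k
    have h1 : ((k+1) • x + z) = x + (k • x + z) := by rw [succ_nsmul]; abel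
    have h2 := Q.subadd x (k • x + z)
    rw [← h1] at h2
    simp only [ha]
    push_cast
    linarith
  have hbdd : ∀ z k, -Q.q (-z) ≤ a z k := by
    intro z k
    have h1 : (k • x : Fin n → ℤ) = (k • x + z) + (-z) := by abel
    have h2 := Q.subadd (k • x + z) (-z)
    rw [← h1, Q.nsmul] at h2
    simp only [ha]
    omega
  have key : ∀ z, ∃ L N, (∀ k, N ≤ k → a z k = L) ∧ ∀ k, L ≤ a z k :=
    fun z => int_seq_stab (a z) (hstep z) _ (hbdd z)
  choose L N hLN hLle using key
  -- basic: value of L via any large k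
  have hval : ∀ z k, N z ≤ k → L z = a z k := fun z k hk => (hLN z k hk).symm
  have hsub : ∀ z w, L (z + w) ≤ L z + L w := by
    intro z w
    set k := N z + N w + N (z + w) with hk
    have h1 : L (z+w) = a (z+w) (k+k) := hval _ _ (by omega)
    have h2 : L z = a z k := hval _ _ (by omega)
    have h3 : L w = a w k := hval _ _ (by omega)
    have h4 : ((k+k) • x + (z+w)) = (k • x + z) + (k • x + w) := by rw [add_nsmul]; abel
    have h5 := Q.subadd (k • x + z) (k • x + w)
    rw [← h4] at h5
    simp only [ha] at h1 h2 h3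
    push_cast at h1
    linarith
  have hnsmul : ∀ (m : ℕ) (z), L (m • z) = m * L z := by
    intro m z
    rcases Nat.eq_zero_or_pos m with rfl | hm
    · have h0 : ∀ k, a 0 k = 0 := by
        intro k
        simp only [ha, Q.nsmul, add_zero]
        ring
      have : L 0 = 0 := by rw [hval 0 (N 0) le_rfl, h0]
      simpa using this
    · set k := N z + N (m • z) with hk
      have h2 : L z = a z k := hval _ _ (by omega)
      have h1 : L (m • z) = a (m • z) (m * k) :=
        hval _ _ (le_trans (by omega) (Nat.le_mul_of_pos_left k hm))
      have h4 : ((m * k) • x + m • z) = m • (k • x + z) := by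
        rw [smul_add, mul_nsmul, smul_comm]
      have h5 : a (m • z) (m * k) = m * a z k := by
        simp only [ha, h4, Q.nsmul]
        push_cast
        ring
      rw [h1, h5, ← h2]
  have hsym : ∀ z, 0 ≤ L z + L (-z) := by
    intro z
    set k := N z + N (-z) with hk
    have h2 : L z = a z k := hval _ _ (by omega)
    have h3 : L (-z) = a (-z) k := hval _ _ (by omega)
    have h4 : ((k+k) • x : Fin n → ℤ) = (k • x + z) + (k • x + (-z)) := by rw [add_nsmul]; abel
    have h5 := Q.subadd (k • x + z) (k • x + (-z))
    rw [← h4, Q.nsmul] at h5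
    simp only [ha] at h2 h3
    push_cast at h5
    linarith
  have hle : ∀ z, L z ≤ Q.q z := by
    intro z
    have h1 := hLle z 0
    have h2 : (0:ℕ) • x + z = z := by rw [zero_nsmul, zero_add]
    simp only [ha, h2] at h1
    omega
  have hx : L x = Q.q x := by
    rw [hval x (N x) le_rfl]
    simp only [ha]
    have h1 : ((N x) • x + x) = (N x + 1) • x := by rw [succ_nsmul]
    rw [h1, Q.nsmul]
    push_cast
    ring
  have hnegx : L (-x) = -Q.q x := by
    rw [hval (-x) (N (-x) + 1) (by omega)]
    simp only [ha]
    have h1 : ((N (-x) + 1) • x + (-x)) = (N (-x)) • x := by rw [succ_nsmul]; abel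
    rw [h1, Q.nsmul]
    push_cast
    ring
  refine ⟨⟨L, hsub, hnsmul, hsym⟩, hle, hx, hnegx, fun v hv => ?_⟩
  show L v + L (-v) = 0
  have h1 := hle v
  have h2 := hle (-v)
  have h3 := hsym v
  omega

lemma GoodFun.stabilize_list {n : ℕ} (Q : GoodFun n) (l : List (Fin n → ℤ)) :
    ∃ Q' : GoodFun n, (∀ z, Q'.q z ≤ Q.q z) ∧
      (∀ v ∈ l, Q'.q v + Q'.q (-v) = 0) ∧
      (∀ v, Q.q v + Q.q (-v) = 0 → Q'.q v + Q'.q (-v) = 0) := by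
  induction l generalizing Q with
  | nil => exact ⟨Q, fun z => le_refl _, by simp, fun v h => h⟩
  | cons x xs ih =>
    obtain ⟨Q1, h1le, h1x, h1negx, h1pres⟩ := Q.stabilize x
    obtain ⟨Q', h'le, h'mem, h'pres⟩ := ih Q1
    refine ⟨Q', fun z => (h'le z).trans (h1le z), ?_, fun v hv => h'pres v (h1pres v hv)⟩
    intro v hv
    rcases List.mem_cons.mp hv with rfl | hv
    · exact h'pres v (by omega)
    · exact h'mem v hv

lemma GoodFun.sum_le {n : ℕ} (Q : GoodFun n) {ι : Type*} (s : Finset ι) (f : ι → Fin n → ℤ) :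
    Q.q (∑ i ∈ s, f i) ≤ ∑ i ∈ s, Q.q (f i) := by
  classical
  induction s using Finset.induction with
  | empty => simp [Q.zero]
  | @insert _ _ h ih =>
    rw [Finset.sum_insert h, Finset.sum_insert h]
    exact (Q.subadd _ _).trans (by omega)

lemma GoodFun.single_val {n : ℕ} (Q : GoodFun n)
    (hbz : ∀ i : Fin n, Q.q (Pi.single i 1) + Q.q (-(Pi.single i 1)) = 0)
    (i : Fin n) (c : ℤ) : Q.q (Pi.single i c) = c * Q.q (Pi.single i 1) := by
  rcases le_or_gt 0 c with hc | hc
  · have h1 : Pi.single i c = (c.toNat) • (Pi.single i (1:ℤ) : Fin n → ℤ) := by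
      ext j
      by_cases h : j = i <;> simp [Pi.single_apply, h, Int.toNat_of_nonneg hc]
    rw [h1, Q.nsmul, Int.toNat_of_nonneg hc]
  · have h1 : Pi.single i c = ((-c).toNat) • (-(Pi.single i (1:ℤ) : Fin n → ℤ)) := by
      ext j
      by_cases h : j = i <;>
        simp [Pi.single_apply, h, Int.toNat_of_nonneg (by omega : (0:ℤ) ≤ -c)] <;>
        omega
    rw [h1, Q.nsmul, Int.toNat_of_nonneg (by omega : (0:ℤ) ≤ -c)]
    have := hbz i
    nlinarith [hbz i]

lemma GoodFun.linear_of_basis {n : ℕ} (Q : GoodFun n)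
    (hbz : ∀ i : Fin n, Q.q (Pi.single i 1) + Q.q (-(Pi.single i 1)) = 0)
    (z : Fin n → ℤ) : Q.q z = ∑ i, z i * Q.q (Pi.single i 1) := by
  have hup : ∀ w : Fin n → ℤ, Q.q w ≤ ∑ i, w i * Q.q (Pi.single i 1) := by
    intro w
    calc Q.q w = Q.q (∑ i, Pi.single i (w i)) := by rw [Finset.univ_sum_single]
      _ ≤ ∑ i, Q.q (Pi.single i (w i)) := Q.sum_le _ _
      _ = ∑ i, w i * Q.q (Pi.single i 1) := by
          exact Finset.sum_congr rfl fun i _ => Q.single_val hbz i (w i)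
  have h1 := hup z
  have h2 := hup (-z)
  have h3 := Q.sym z
  have h4 : ∑ i, (-z) i * Q.q (Pi.single i 1) = -∑ i, z i * Q.q (Pi.single i 1) := by
    rw [← Finset.sum_neg_distrib]
    exact Finset.sum_congr rfl fun i _ => by simp [neg_mul]
  omega


/-- cast a lattice vector to ℝⁿ -/
def castR {n : ℕ} (z : Fin n → ℤ) : Fin n → ℝ := fun i => (z i : ℝ)

lemma castR_add {n : ℕ} (z w : Fin n → ℤ) : castR (z + w) = castR z + castR w := by
  ext i; simp [castR]

lemma castR_neg {n : ℕ} (z : Fin n → ℤ) : castR (-z) = -(castR z) := by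
  ext i; simp [castR]

lemma castR_nsmul {n : ℕ} (m : ℕ) (z : Fin n → ℤ) : castR (m • z) = (m : ℝ) • castR z := by
  ext i; simp [castR]

section Dual
variable (hp1 : ∀ (a : ℝ) (x : Fin n → ℝ), p (a • x) = |a| * p x)
    (hp2 : ∀ x y : Fin n → ℝ, p (x + y) ≤ p x + p y)
    (hint : ∀ x : Fin n → ℤ, ∃ m : ℤ, p (fun i => (x i : ℝ)) = (m : ℝ))

include hp1 hp2 hint in
lemma exists_dual_vector (x : Fin n → ℤ) :
    ∃ y : Fin n → ℤ,
      (∀ z : Fin n → ℤ, castR y ⬝ᵥ castR z ≤ p (castR z)) ∧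
      castR y ⬝ᵥ castR x = p (castR x) := by
  classical
  choose qv hqv using hint
  have hq : ∀ z : Fin n → ℤ, p (castR z) = (qv z : ℝ) := fun z => hqv z
  have hQsub : ∀ z w : Fin n → ℤ, qv (z + w) ≤ qv z + qv w := by
    intro z w
    have h := hp2 (castR z) (castR w)
    rw [← castR_add, hq, hq, hq] at h
    exact_mod_cast h
  have hQnsmul : ∀ (m : ℕ) (z : Fin n → ℤ), qv (m • z) = m * qv z := by
    intro m z
    have h : p (castR (m • z)) = (m : ℝ) * p (castR z) := by
      rw [castR_nsmul, hp1]
      simp [abs_of_nonneg (by positivity : (0:ℝ) ≤ (m:ℝ))]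
    rw [hq, hq] at h
    exact_mod_cast h
  have hQsym : ∀ z : Fin n → ℤ, 0 ≤ qv z + qv (-z) := by
    intro z
    have h1 : p (castR (-z)) = p (castR z) := by rw [castR_neg, p_neg hp1]
    have h2 : 0 ≤ p (castR z) := p_nonneg hp1 hp2 _
    rw [hq, hq] at h1
    rw [hq] at h2
    have h1' : qv (-z) = qv z := by exact_mod_cast h1
    have h2' : 0 ≤ qv z := by exact_mod_cast h2
    omega
  set Q0 : GoodFun n := ⟨qv, hQsub, hQnsmul, hQsym⟩ with hQ0
  obtain ⟨Q1, h1le, h1x, h1negx, h1pres⟩ := Q0.stabilize x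
  obtain ⟨Q', h'le, h'mem, h'pres⟩ := Q1.stabilize_list (List.ofFn fun i => Pi.single i 1)
  have hbz : ∀ i : Fin n, Q'.q (Pi.single i 1) + Q'.q (-(Pi.single i 1)) = 0 := by
    intro i
    refine h'mem _ ?_
    rw [List.mem_ofFn]
    exact ⟨i, rfl⟩
  have hlin := Q'.linear_of_basis hbz
  set y : Fin n → ℤ := fun i => Q'.q (Pi.single i 1) with hy
  have hdotz : ∀ z : Fin n → ℤ, castR y ⬝ᵥ castR z = (Q'.q z : ℝ) := by
    intro z
    rw [hlin z, dotProduct]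
    push_cast
    exact Finset.sum_congr rfl fun i _ => mul_comm _ _
  have hQ0q : ∀ z, Q0.q z = qv z := fun z => rfl
  have hxval : Q'.q x = qv x := by
    have e1 : Q'.q x ≤ qv x := (h'le x).trans (h1x ▸ le_refl _)
    have e2 : Q'.q (-x) ≤ -qv x := (h'le (-x)).trans (h1negx ▸ le_refl _)
    have e3 : Q'.q x + Q'.q (-x) = 0 := h'pres x (by rw [h1x, h1negx, hQ0q]; ring)
    omega
  refine ⟨y, fun z => ?_, ?_⟩
  · rw [hdotz, hq]
    have : Q'.q z ≤ qv z := (h'le z).trans (h1le z)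
    exact_mod_cast this
  · rw [hdotz, hq, hxval]

lemma le_of_le_add_inv (a b K : ℝ) (h : ∀ m : ℕ, a ≤ b + K * (1 / (m + 1))) : a ≤ b := by
  have t : Filter.Tendsto (fun m : ℕ => b + K * (1 / (m + 1))) Filter.atTop (nhds (b + K * 0)) :=
    Filter.Tendsto.const_add b (tendsto_one_div_add_atTop_nhds_zero_nat.const_mul K)
  rw [mul_zero, add_zero] at t
  exact ge_of_tendsto t (Filter.Eventually.of_forall h)

lemma dot_le_sum_abs (v u : Fin n → ℝ) : v ⬝ᵥ u ≤ (∑ i, |v i|) * ‖u‖ := by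
  rw [Finset.sum_mul]
  refine Finset.sum_le_sum fun i _ => ?_
  calc v i * u i ≤ |v i * u i| := le_abs_self _
    _ = |v i| * |u i| := abs_mul _ _
    _ ≤ |v i| * ‖u‖ := by
        refine mul_le_mul_of_nonneg_left ?_ (abs_nonneg _)
        exact (Real.norm_eq_abs _ ▸ norm_le_pi_norm u i)

lemma floor_approx (w : Fin n → ℝ) (m : ℕ) :
    ‖(((m : ℝ) + 1))⁻¹ • castR (fun i => ⌊((m : ℝ) + 1) * w i⌋) - w‖ ≤ ((m : ℝ) + 1)⁻¹ := by
  have hm : (0:ℝ) < (m : ℝ) + 1 := by positivity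
  rw [pi_norm_le_iff_of_nonneg (by positivity)]
  intro i
  have h1 : ((((m : ℝ) + 1))⁻¹ • castR (fun i => ⌊((m : ℝ) + 1) * w i⌋)) i - w i
      = (((m : ℝ) + 1))⁻¹ * ((⌊((m : ℝ) + 1) * w i⌋ : ℝ) - ((m : ℝ) + 1) * w i) := by
    simp only [Pi.smul_apply, castR, smul_eq_mul]
    field_simp
  rw [Pi.sub_apply, h1, Real.norm_eq_abs, abs_mul, abs_of_pos (inv_pos.mpr hm)]
  have h2 : |(⌊((m : ℝ) + 1) * w i⌋ : ℝ) - ((m : ℝ) + 1) * w i| ≤ 1 := by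
    rw [abs_le]
    constructor
    · linarith [Int.lt_floor_add_one (((m : ℝ) + 1) * w i)]
    · linarith [Int.floor_le (((m : ℝ) + 1) * w i)]
  calc _ ≤ ((m:ℝ)+1)⁻¹ * 1 := mul_le_mul_of_nonneg_left h2 (by positivity)
    _ = _ := mul_one _

include hp1 hp2 in
lemma dual_le_real (y : Fin n → ℤ)
    (h : ∀ z : Fin n → ℤ, castR y ⬝ᵥ castR z ≤ p (castR z)) (w : Fin n → ℝ) :
    castR y ⬝ᵥ w ≤ p w := by
  obtain ⟨C, hC, hCle⟩ := p_le_const hp1 hp2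
  set Cy := ∑ i, |castR y i| with hCy
  refine le_of_le_add_inv _ _ (Cy + C) fun m => ?_
  set z : Fin n → ℤ := fun i => ⌊((m : ℝ) + 1) * w i⌋ with hz
  set wm : Fin n → ℝ := (((m : ℝ) + 1))⁻¹ • castR z with hwm
  have hm : (0:ℝ) < (m : ℝ) + 1 := by positivity
  have happ : ‖wm - w‖ ≤ ((m : ℝ) + 1)⁻¹ := floor_approx w m
  have h1 : castR y ⬝ᵥ wm ≤ p wm := by
    rw [hwm, dotProduct_smul, smul_eq_mul, hp1, abs_of_pos (inv_pos.mpr hm)]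
    exact mul_le_mul_of_nonneg_left (h z) (by positivity)
  have h2 : castR y ⬝ᵥ (w - wm) ≤ Cy * ‖w - wm‖ := dot_le_sum_abs _ _
  have h3 : p wm ≤ p w + C * ‖wm - w‖ := by
    have := hp2 w (wm - w)
    have h4 : w + (wm - w) = wm := by abel
    rw [h4] at this
    linarith [hCle (wm - w)]
  have h5 : castR y ⬝ᵥ w = castR y ⬝ᵥ (w - wm) + castR y ⬝ᵥ wm := by
    rw [dotProduct_sub]; ring
  have h6 : ‖w - wm‖ = ‖wm - w‖ := norm_sub_rev _ _
  have h7 : ‖wm - w‖ ≤ 1 / ((m:ℝ) + 1) := by rw [one_div]; exact happ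
  have hCy0 : 0 ≤ Cy := Finset.sum_nonneg fun i _ => abs_nonneg _
  calc castR y ⬝ᵥ w = castR y ⬝ᵥ (w - wm) + castR y ⬝ᵥ wm := h5
    _ ≤ Cy * ‖w - wm‖ + (p w + C * ‖wm - w‖) := by linarith
    _ ≤ p w + (Cy + C) * (1 / ((m:ℝ) + 1)) := by
        rw [h6]
        nlinarith [norm_nonneg (wm - w)]

/-- the set of integral dual vectors -/
def dualSet (p : (Fin n → ℝ) → ℝ) : Set (Fin n → ℤ) :=
  {y : Fin n → ℤ | ∀ w : Fin n → ℝ, castR y ⬝ᵥ w ≤ p w}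

lemma castR_single (i : Fin n) : castR (Pi.single i 1) = Pi.single i (1:ℝ) := by
  ext j
  by_cases h : j = i <;> simp [castR, Pi.single_apply, h]

include hp1 in
lemma dualSet_finite : (dualSet p).Finite := by
  classical
  refine Set.Finite.subset (Set.Finite.pi (t := fun i : Fin n =>
      Set.Icc (-⌈p (Pi.single i (1:ℝ))⌉) ⌈p (Pi.single i (1:ℝ))⌉) fun i => Set.finite_Icc _ _) ?_
  intro y hy
  rw [Set.mem_pi]
  intro i _
  have h1 : castR y ⬝ᵥ Pi.single i (1:ℝ) = (y i : ℝ) := by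
    rw [dotProduct_single, mul_one]; rfl
  have h2 : castR y ⬝ᵥ (-(Pi.single i (1:ℝ))) = -(y i : ℝ) := by
    rw [dotProduct_neg, h1]
  have h3 := hy (Pi.single i (1:ℝ))
  have h4 := hy (-(Pi.single i (1:ℝ)))
  rw [h1] at h3
  rw [h2, p_neg hp1] at h4
  constructor
  · have : -(⌈p (Pi.single i (1:ℝ))⌉ : ℝ) ≤ (y i : ℝ) := by
      linarith [Int.le_ceil (p (Pi.single i (1:ℝ)))]
    exact_mod_cast this
  · have : (y i : ℝ) ≤ (⌈p (Pi.single i (1:ℝ))⌉ : ℝ) := by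
      linarith [Int.le_ceil (p (Pi.single i (1:ℝ)))]
    exact_mod_cast this

include hp1 hp2 hint in
lemma ball_eq_poly :
    {φ : Fin n → ℝ | p φ ≤ 1} = {φ : Fin n → ℝ | ∀ y ∈ dualSet p, castR y ⬝ᵥ φ ≤ 1} := by
  obtain ⟨C, hC, hCle⟩ := p_le_const hp1 hp2
  ext φ
  simp only [Set.mem_setOf_eq]
  constructor
  · intro hφ y hy
    exact (hy φ).trans hφ
  · intro hφ
    refine le_of_le_add_inv _ _ (2 * C) fun m => ?_
    set z : Fin n → ℤ := fun i => ⌊((m : ℝ) + 1) * φ i⌋ with hz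
    set wm : Fin n → ℝ := (((m : ℝ) + 1))⁻¹ • castR z with hwm
    have hm : (0:ℝ) < (m : ℝ) + 1 := by positivity
    have happ : ‖wm - φ‖ ≤ ((m : ℝ) + 1)⁻¹ := floor_approx φ m
    obtain ⟨y, hyz, hyx⟩ := exists_dual_vector hp1 hp2 hint z
    have hyD : y ∈ dualSet p := fun w => dual_le_real hp1 hp2 y hyz w
    have heq : castR y ⬝ᵥ wm = p wm := by
      rw [hwm, dotProduct_smul, smul_eq_mul, hp1, abs_of_pos (inv_pos.mpr hm), hyx]
    have h3 : p φ ≤ p wm + C * ‖φ - wm‖ := by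
      have := hp2 wm (φ - wm)
      have h4 : wm + (φ - wm) = φ := by abel
      rw [h4] at this
      linarith [hCle (φ - wm)]
    have h5 : castR y ⬝ᵥ wm = castR y ⬝ᵥ φ + castR y ⬝ᵥ (wm - φ) := by
      rw [dotProduct_sub]; ring
    have h6 : castR y ⬝ᵥ (wm - φ) ≤ p (wm - φ) := hyD _
    have h7 : p (wm - φ) ≤ C * ‖wm - φ‖ := hCle _
    have h8 : castR y ⬝ᵥ φ ≤ 1 := hφ y hyD
    have h9 : ‖φ - wm‖ = ‖wm - φ‖ := norm_sub_rev _ _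
    have h10 : ‖wm - φ‖ ≤ 1 / ((m:ℝ) + 1) := by rw [one_div]; exact happ
    calc p φ ≤ p wm + C * ‖φ - wm‖ := h3
      _ = castR y ⬝ᵥ φ + castR y ⬝ᵥ (wm - φ) + C * ‖φ - wm‖ := by rw [← h5, heq]
      _ ≤ 1 + 2 * C * (1 / ((m:ℝ) + 1)) := by
          rw [h9]
          nlinarith [norm_nonneg (wm - φ)]

end Dual

end Basic

noncomputable section
open scoped Classical

variable {n : ℕ}

/-- polyhedron cut out by half-spaces `y ⬝ᵥ x ≤ 1` -/
def poly (S : Finset (Fin n → ℝ)) : Set (Fin n → ℝ) := {x | ∀ y ∈ S, y ⬝ᵥ x ≤ 1}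

/-- constraints tight at `x` -/
def tight (S : Finset (Fin n → ℝ)) (x : Fin n → ℝ) : Finset (Fin n → ℝ) :=
  S.filter (fun y => y ⬝ᵥ x = 1)

/-- points where the tight constraints span everything -/
def vertexSet (S : Finset (Fin n → ℝ)) : Set (Fin n → ℝ) :=
  {x | x ∈ poly S ∧ Submodule.span ℝ (tight S x : Set (Fin n → ℝ)) = ⊤}

lemma continuous_dot (v : Fin n → ℝ) : Continuous fun x : Fin n → ℝ => v ⬝ᵥ x :=
  continuous_finset_sum _ fun i _ => continuous_const.mul (continuous_apply i)

lemma poly_convex (S : Finset (Fin n → ℝ)) : Convex ℝ (poly S) := by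
  intro x hx y hy a b ha hb hab
  intro z hz
  have h1 : z ⬝ᵥ (a • x + b • y) = a * (z ⬝ᵥ x) + b * (z ⬝ᵥ y) := by
    rw [dotProduct_add, dotProduct_smul, dotProduct_smul]
    simp [smul_eq_mul]
  have h2 := hx z hz
  have h3 := hy z hz
  rw [h1]
  nlinarith

lemma poly_closed (S : Finset (Fin n → ℝ)) : IsClosed (poly S) := by
  have h : poly S = ⋂ y ∈ S, {x | y ⬝ᵥ x ≤ 1} := by
    ext x; simp [poly]
  rw [h]
  exact isClosed_biInter fun y _ => isClosed_le (continuous_dot y) continuous_const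

lemma vertexSet_subset (S : Finset (Fin n → ℝ)) : vertexSet S ⊆ poly S := fun _ hx => hx.1

lemma vertexSet_finite (S : Finset (Fin n → ℝ)) : (vertexSet S).Finite := by
  have hinj : Set.InjOn (tight S) (vertexSet S) := by
    intro x₁ hx₁ x₂ hx₂ h
    set d := x₁ - x₂ with hd
    have key : ∀ v ∈ Submodule.span ℝ ((tight S x₁ : Set (Fin n → ℝ))), v ⬝ᵥ d = 0 := by
      intro v hv
      induction hv using Submodule.span_induction with
      | mem y hy =>
        have hy1 : y ⬝ᵥ x₁ = 1 := (Finset.mem_filter.mp hy).2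
        have hy2 : y ⬝ᵥ x₂ = 1 := by
          rw [h] at hy
          exact (Finset.mem_filter.mp hy).2
        rw [hd, dotProduct_sub, hy1, hy2, sub_self]
      | zero => rw [zero_dotProduct]
      | add u w _ _ hu hw => rw [add_dotProduct, hu, hw, add_zero]
      | smul c u _ hu => rw [smul_dotProduct, hu, smul_zero]
    have hd0 : d ⬝ᵥ d = 0 := key d (hx₁.2 ▸ Submodule.mem_top)
    have := dotProduct_self_eq_zero.mp hd0
    exact sub_eq_zero.mp this
  refine Set.Finite.of_finite_image (Set.Finite.subset S.powerset.finite_toSet ?_) hinj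
  rintro T ⟨x, _, rfl⟩
  simp only [Finset.coe_powerset, Set.mem_preimage, Set.mem_powerset_iff, Finset.coe_subset]
  exact Finset.filter_subset _ _

lemma exists_orth (T : Finset (Fin n → ℝ))
    (h : Submodule.span ℝ (T : Set (Fin n → ℝ)) ≠ ⊤) :
    ∃ v : Fin n → ℝ, v ≠ 0 ∧ ∀ y ∈ T, y ⬝ᵥ v = 0 := by
  obtain ⟨x, hx⟩ : ∃ x, x ∉ Submodule.span ℝ (T : Set (Fin n → ℝ)) := by
    by_contra hc
    push_neg at hc
    exact h (Submodule.eq_top_iff'.mpr hc)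
  obtain ⟨f, hf0, hfmap⟩ := Submodule.exists_dual_map_eq_bot_of_notMem hx inferInstance
  set v : Fin n → ℝ := fun i => f (Pi.single i 1) with hv
  have hfeq : ∀ w : Fin n → ℝ, w ⬝ᵥ v = f w := by
    intro w
    rw [LinearMap.pi_apply_eq_sum_univ f w]
    refine Finset.sum_congr rfl fun i _ => ?_
    have hsingle : (fun j => if i = j then (1:ℝ) else 0) = Pi.single i 1 := by
      ext j
      simp [Pi.single_apply, eq_comm]
    rw [hsingle]
    simp [hv, smul_eq_mul]
  refine ⟨v, ?_, fun y hy => ?_⟩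
  · intro hv0
    apply hf0
    rw [← hfeq x, hv0, dotProduct_zero]
  · rw [hfeq y]
    have : f y ∈ Submodule.map f (Submodule.span ℝ (T : Set (Fin n → ℝ))) :=
      Submodule.mem_map_of_mem (Submodule.subset_span hy)
    rw [hfmap] at this
    simpa using this

lemma poly_step (S : Finset (Fin n → ℝ)) (hbd : Bornology.IsBounded (poly S))
    {x v : Fin n → ℝ} (hx : x ∈ poly S) (hv : v ≠ 0)
    (horth : ∀ y ∈ tight S x, y ⬝ᵥ v = 0) :
    ∃ t : ℝ, 0 < t ∧ x + t • v ∈ poly S ∧ tight S x ⊂ tight S (x + t • v) := by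
  set I := {t : ℝ | x + t • v ∈ poly S} with hI
  have hI0 : (0:ℝ) ∈ I := by
    show x + (0:ℝ) • v ∈ poly S
    simpa using hx
  have hIc : IsClosed I := by
    have : Continuous fun t : ℝ => x + t • v := by continuity
    exact (poly_closed S).preimage this
  have hIbd : Bornology.IsBounded I := by
    obtain ⟨C, hC⟩ := isBounded_iff_forall_norm_le.mp hbd
    rw [isBounded_iff_forall_norm_le]
    refine ⟨(C + ‖x‖) / ‖v‖, fun t ht => ?_⟩
    have hvn : 0 < ‖v‖ := norm_pos_iff.mpr hv
    have h1 : ‖x + t • v‖ ≤ C := hC _ ht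
    have h2 : ‖t • v‖ ≤ C + ‖x‖ := by
      have : t • v = (x + t • v) - x := by abel
      rw [this]
      calc ‖(x + t • v) - x‖ ≤ ‖x + t • v‖ + ‖x‖ := norm_sub_le _ _
        _ ≤ C + ‖x‖ := by linarith
    rw [norm_smul, Real.norm_eq_abs] at h2
    rw [Real.norm_eq_abs, le_div_iff₀ hvn]
    exact h2
  have hIcomp : IsCompact I := Metric.isCompact_of_isClosed_isBounded hIc hIbd
  set t := sSup I with hts
  have htI : t ∈ I := hIcomp.sSup_mem ⟨0, hI0⟩
  have htnn : 0 ≤ t := le_csSup hIcomp.bddAbove hI0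
  have hmax : ∃ y ∈ S, y ⬝ᵥ (x + t • v) = 1 ∧ 0 < y ⬝ᵥ v := by
    by_contra hcon
    push_neg at hcon
    set S0 := S.filter (fun y => 0 < y ⬝ᵥ v) with hS0
    have hS0lt : ∀ y ∈ S0, y ⬝ᵥ (x + t • v) < 1 := by
      intro y hy
      rcases Finset.mem_filter.mp hy with ⟨hyS, hyv⟩
      rcases lt_or_eq_of_le (htI y hyS) with h | h
      · exact h
      · exact absurd hyv (not_lt.mpr (hcon y hyS h))
    set ε := if h : S0.Nonempty then S0.inf' h (fun y => (1 - y ⬝ᵥ (x + t • v)) / (y ⬝ᵥ v)) else 1 with hε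
    have hεpos : 0 < ε := by
      rw [hε]
      split_ifs with h
      · rw [Finset.lt_inf'_iff]
        intro y hy
        have h1 := hS0lt y hy
        have h2 := (Finset.mem_filter.mp hy).2
        exact div_pos (by linarith) h2
      · exact one_pos
    have hmem : t + ε ∈ I := by
      intro y hyS
      have hsplit : y ⬝ᵥ (x + (t + ε) • v) = y ⬝ᵥ (x + t • v) + ε * (y ⬝ᵥ v) := by
        rw [dotProduct_add, dotProduct_add, dotProduct_smul,
          dotProduct_smul]
        simp [smul_eq_mul]
        ring
      rw [hsplit]
      rcases le_or_gt (y ⬝ᵥ v) 0 with h | h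
      · have h1 := htI y hyS
        nlinarith
      · have hyS0 : y ∈ S0 := Finset.mem_filter.mpr ⟨hyS, h⟩
        have h1 : ε ≤ (1 - y ⬝ᵥ (x + t • v)) / (y ⬝ᵥ v) := by
          rw [hε]
          rw [dif_pos ⟨y, hyS0⟩]
          exact Finset.inf'_le _ hyS0
        rw [le_div_iff₀ h] at h1
        linarith
    have : t + ε ≤ t := le_csSup hIcomp.bddAbove hmem
    linarith
  obtain ⟨y₀, hy₀S, hy₀eq, hy₀v⟩ := hmax
  have hy₀notight : y₀ ∉ tight S x := by
    intro h
    have := horth y₀ h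
    linarith
  have ht0 : 0 < t := by
    rcases lt_or_eq_of_le htnn with h | h
    · exact h
    · exfalso
      apply hy₀notight
      rw [tight, Finset.mem_filter]
      refine ⟨hy₀S, ?_⟩
      rw [← h] at hy₀eq
      simpa using hy₀eq
  refine ⟨t, ht0, htI, ?_⟩
  have hsub : tight S x ⊆ tight S (x + t • v) := by
    intro y hy
    rcases Finset.mem_filter.mp hy with ⟨hyS, hyx⟩
    rw [tight, Finset.mem_filter]
    refine ⟨hyS, ?_⟩
    rw [dotProduct_add, dotProduct_smul, smul_eq_mul, horth y hy, hyx]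
    ring
  refine (Finset.ssubset_iff_of_subset hsub).mpr
    ⟨y₀, Finset.mem_filter.mpr ⟨hy₀S, hy₀eq⟩, hy₀notight⟩

lemma poly_subset_hull (S : Finset (Fin n → ℝ)) (hbd : Bornology.IsBounded (poly S)) :
    poly S ⊆ convexHull ℝ (vertexSet S) := by
  suffices h : ∀ k (x : Fin n → ℝ), x ∈ poly S → S.card - (tight S x).card ≤ k →
      x ∈ convexHull ℝ (vertexSet S) by
    intro x hx
    exact h S.card x hx (by omega)
  intro k
  induction k with
  | zero =>
    intro x hx hk
    have hcards : (tight S x).card ≤ S.card := Finset.card_le_card (Finset.filter_subset _ _)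
    have hTS : tight S x = S :=
      Finset.eq_of_subset_of_card_le (Finset.filter_subset _ _) (by omega)
    by_cases hspan : Submodule.span ℝ ((tight S x : Set (Fin n → ℝ))) = ⊤
    · exact subset_convexHull ℝ _ ⟨hx, hspan⟩
    · exfalso
      obtain ⟨v, hv, horth⟩ := exists_orth _ hspan
      obtain ⟨t, ht, hmem, hss⟩ := poly_step S hbd hx hv horth
      have h1 : (tight S (x + t • v)).card ≤ S.card :=
        Finset.card_le_card (Finset.filter_subset _ _)
      have h2 := Finset.card_lt_card hss
      rw [hTS] at h2
      omega
  | succ k ih =>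
    intro x hx hk
    by_cases hspan : Submodule.span ℝ ((tight S x : Set (Fin n → ℝ))) = ⊤
    · exact subset_convexHull ℝ _ ⟨hx, hspan⟩
    · obtain ⟨v, hv, horth⟩ := exists_orth _ hspan
      have horth' : ∀ y ∈ tight S x, y ⬝ᵥ (-v) = 0 := by
        intro y hy
        rw [dotProduct_neg, horth y hy, neg_zero]
      obtain ⟨t₁, ht₁, hmem₁, hss₁⟩ := poly_step S hbd hx hv horth
      obtain ⟨t₂, ht₂, hmem₂, hss₂⟩ := poly_step S hbd hx (neg_ne_zero.mpr hv) horth'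
      have hcards : (tight S x).card ≤ S.card := Finset.card_le_card (Finset.filter_subset _ _)
      have hc₁ : (tight S (x + t₁ • v)).card ≤ S.card :=
        Finset.card_le_card (Finset.filter_subset _ _)
      have hc₂ : (tight S (x + t₂ • (-v))).card ≤ S.card :=
        Finset.card_le_card (Finset.filter_subset _ _)
      have hlt₁ := Finset.card_lt_card hss₁
      have hlt₂ := Finset.card_lt_card hss₂
      have h₁ := ih (x + t₁ • v) hmem₁ (by omega)
      have h₂ := ih (x + t₂ • (-v)) hmem₂ (by omega)
      set a := t₂ / (t₁ + t₂) with ha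
      set b := t₁ / (t₁ + t₂) with hb
      have hab : a + b = 1 := by
        rw [ha, hb]
        field_simp
        ring
      have hane : (0:ℝ) ≤ a := by positivity
      have hbne : (0:ℝ) ≤ b := by positivity
      have hcomb := (convex_convexHull ℝ (vertexSet S)) h₁ h₂ hane hbne hab
      have heq : a • (x + t₁ • v) + b • (x + t₂ • (-v)) = x := by
        have h2 : a * t₁ - b * t₂ = 0 := by
          rw [ha, hb]
          field_simp
          ring
        match_scalars
        · linarith
        · linarith
      rwa [heq] at hcomb

lemma poly_eq_hull (S : Finset (Fin n → ℝ)) (hbd : Bornology.IsBounded (poly S)) :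
    poly S = convexHull ℝ (vertexSet S) :=
  le_antisymm (poly_subset_hull S hbd)
    (convexHull_min (vertexSet_subset S) (poly_convex S))


lemma vertex_rational (S : Finset (Fin n → ℝ)) (hS : ∀ y ∈ S, ∃ z : Fin n → ℤ, y = castR z)
    {x : Fin n → ℝ} (hx : x ∈ vertexSet S) (i : Fin n) : ∃ q : ℚ, x i = (q : ℝ) := by
  obtain ⟨hxp, hspan⟩ := hx
  set T := tight S x with hT
  have htight : ∀ y ∈ T, y ⬝ᵥ x = 1 := fun y hy => (Finset.mem_filter.mp hy).2
  obtain ⟨b, hbT, hbspan, hbind⟩ := exists_linearIndependent ℝ (T : Set (Fin n → ℝ))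
  have hbfin : b.Finite := T.finite_toSet.subset hbT
  haveI : Fintype b := hbfin.fintype
  have hbtop : ⊤ ≤ Submodule.span ℝ (Set.range ((↑) : b → (Fin n → ℝ))) := by
    rw [Subtype.range_coe, hbspan, hspan]
  let basis : Module.Basis b ℝ (Fin n → ℝ) := Module.Basis.mk hbind hbtop
  have hcard : Fintype.card b = n := by
    have h1 := Module.finrank_eq_card_basis basis
    rw [Module.finrank_pi] at h1
    simpa using h1.symm
  let e : Fin n ≃ b := (Fintype.equivFinOfCardEq hcard).symm
  have hrow : ∀ j : b, ∃ z : Fin n → ℤ, (j : Fin n → ℝ) = castR z := by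
    intro j
    exact hS _ (Finset.filter_subset _ _ (hbT j.2))
  choose zrow hzrow using hrow
  set Mz : Matrix (Fin n) (Fin n) ℤ := Matrix.of (fun i' j' => zrow (e i') j') with hMz
  set MR : Matrix (Fin n) (Fin n) ℝ := Mz.map (Int.cast) with hMR
  have hMRrow : ∀ i', (fun j' => MR i' j') = ((e i' : Fin n → ℝ)) := by
    intro i'
    ext j'
    rw [hzrow (e i')]
    rfl
  have hind : LinearIndependent ℝ (fun i' => MR i') := by
    have h1 : LinearIndependent ℝ (fun j : b => (j : Fin n → ℝ)) := hbind
    have h2 := h1.comp e e.injective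
    have h3 : (fun i' => MR i') = fun i' => ((e i' : Fin n → ℝ)) := by
      ext i' j'
      rw [← hMRrow i']
    rw [h3]
    exact h2
  have hunit : IsUnit MR := Matrix.linearIndependent_rows_iff_isUnit.mp hind
  have hdet : IsUnit MR.det := (Matrix.isUnit_iff_isUnit_det MR).mp hunit
  have hMx : MR *ᵥ x = 1 := by
    funext i'
    show (fun j' => MR i' j') ⬝ᵥ x = 1
    rw [hMRrow i']
    exact htight _ (hbT (e i').2)
  have hxinv : x = MR⁻¹ *ᵥ (1 : Fin n → ℝ) := by
    have := congrArg (fun w => MR⁻¹ *ᵥ w) hMx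
    simpa [Matrix.mulVec_mulVec, Matrix.nonsing_inv_mul MR hdet] using this
  have hdetcast : MR.det = ((Mz.det : ℤ) : ℝ) := by
    have hcast : (Int.cast : ℤ → ℝ) = ⇑(Int.castRingHom ℝ) := rfl
    rw [hMR, hcast, ← RingHom.mapMatrix_apply, ← RingHom.map_det]
  have hadj : MR.adjugate = (Mz.adjugate).map Int.cast := by
    have hcast : (Int.cast : ℤ → ℝ) = ⇑(Int.castRingHom ℝ) := rfl
    rw [hMR, hcast, ← RingHom.mapMatrix_apply, ← RingHom.map_adjugate, RingHom.mapMatrix_apply]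
  have hdetne : Mz.det ≠ 0 := by
    intro h
    rw [h] at hdetcast
    simp at hdetcast
    exact hdet.ne_zero hdetcast
  refine ⟨((Mz.adjugate *ᵥ (1 : Fin n → ℤ)) i : ℚ) / (Mz.det : ℚ), ?_⟩
  have hxi : x i = (MR.det)⁻¹ * ((Mz.adjugate *ᵥ (1 : Fin n → ℤ)) i : ℝ) := by
    rw [hxinv, Matrix.inv_def, Ring.inverse_eq_inv]
    simp only [Matrix.smul_mulVec, Pi.smul_apply, smul_eq_mul]
    congr 1
    rw [hadj]
    simp [Matrix.mulVec, dotProduct]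
  rw [hxi, hdetcast]
  simp only [Rat.cast_div, Rat.cast_intCast]
  ring


end
end Thurston

open Thurston in
/-- The unit ball of a norm on `ℝⁿ` that is integer-valued on the lattice `ℤⁿ`
is the convex hull of finitely many points with rational coordinates. -/
theorem norm_ball_convexHull_rational_points (n : ℕ) (hn : 0 < n)
    (p : (Fin n → ℝ) → ℝ)
    (hp1 : ∀ (a : ℝ) (x : Fin n → ℝ), p (a • x) = |a| * p x)
    (hp2 : ∀ x y : Fin n → ℝ, p (x + y) ≤ p x + p y)
    (hdef : ∀ φ : Fin n → ℝ, p φ = 0 → φ = 0)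
    (hint : ∀ x : Fin n → ℤ, ∃ m : ℤ, p (fun i => (x i : ℝ)) = (m : ℝ)) :
    ∃ F : Finset (Fin n → ℝ),
      (∀ v ∈ F, ∀ i : Fin n, ∃ q : ℚ, v i = (q : ℝ)) ∧
      {φ : Fin n → ℝ | p φ ≤ 1} = convexHull ℝ (↑F : Set (Fin n → ℝ)) := by
  classical
  have hfin : (dualSet p).Finite := dualSet_finite hp1
  set S' : Finset (Fin n → ℝ) := hfin.toFinset.image castR with hS'
  have hmemS' : ∀ y', y' ∈ S' ↔ ∃ y ∈ dualSet p, castR y = y' := by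
    intro y'
    simp [hS', Set.Finite.mem_toFinset]
  have hpoly : {φ : Fin n → ℝ | p φ ≤ 1} = poly S' := by
    rw [ball_eq_poly hp1 hp2 hint]
    ext φ
    simp only [poly, Set.mem_setOf_eq]
    constructor
    · intro h y' hy'
      obtain ⟨y, hyD, rfl⟩ := (hmemS' y').mp hy'
      exact h y hyD
    · intro h y hy
      exact h (castR y) ((hmemS' _).mpr ⟨y, hy, rfl⟩)
  have hbd : Bornology.IsBounded (poly S') := by
    rw [← hpoly]
    exact (ball_isCompact hp1 hp2 hn hdef).isBounded
  have hS'int : ∀ y ∈ S', ∃ z : Fin n → ℤ, y = castR z := by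
    intro y hy
    obtain ⟨z, _, rfl⟩ := (hmemS' y).mp hy
    exact ⟨z, rfl⟩
  refine ⟨(vertexSet_finite S').toFinset, ?_, ?_⟩
  · intro v hv i
    exact vertex_rational S' hS'int ((Set.Finite.mem_toFinset _).mp hv) i
  · rw [hpoly, poly_eq_hull S' hbd, (vertexSet_finite S').coe_toFinset]
end
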